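/- arXiv:2302.10857 — 2 statements merged into one kernel-verified Lean document; each statement's English description precedes it below -/
import Mathlib

section
/- Let D ⊆ ℂ be a bounded Jordan domain, z ∈ D, and let φ : 𝔻 → D be the conformal map with φ(0) = z and φ'(0) > 0. Suppose X ⊆ ∂D is nonempty and there exist δ, β ∈ (0,1) such that φ restricted to W = {w ∈ 𝔻 : dist(w, φ^{-1}(X)) < δ} is β-Hölder continuous. Fix a Whitney square decomposition 𝒲 of D and a square Q̃ ∈ 𝒲 containing z. Then for every a ∈ (0,1) there exists M > 0, depending only on a, β, δ, D, z, such that: whenever w ∈ X and the hyperbolic geodesic in D from z to w passes through a square Q ∈ 𝒲, the hyperbolic distance in D from cen(Q̃) to cen(Q) is at most M · len(Q)^{−a}. -/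
set_option maxHeartbeats 1600000


open Complex Metric Set Filter Topology
open scoped NNReal

/-- The hyperbolic length of a curve `γ` over the parameter interval `[0,1]`, for the
hyperbolic metric `|dz| / (1 - |z|²)` on the unit disk. -/
noncomputable def hypLength (γ : ℝ → ℂ) : ℝ :=
  ∫ t in (0 : ℝ)..1, ‖deriv γ t‖ / (1 - ‖γ t‖ ^ 2)

/-- The hyperbolic distance on the unit disk, defined as the infimum of the hyperbolic
lengths of `C¹` curves joining the two points inside the disk. -/
noncomputable def hypDistDisk (u v : ℂ) : ℝ :=
  sInf {L : ℝ | ∃ γ : ℝ → ℂ, ContDiffOn ℝ 1 γ (Set.Icc 0 1) ∧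
    (∀ t ∈ Set.Icc (0 : ℝ) 1, γ t ∈ Metric.ball (0 : ℂ) 1) ∧
    γ 0 = u ∧ γ 1 = v ∧ L = hypLength γ}

/-- The closed axis-parallel square with center `c` and side length `l`. -/
def squareSet (c : ℂ) (l : ℝ) : Set ℂ :=
  {w : ℂ | |w.re - c.re| ≤ l / 2 ∧ |w.im - c.im| ≤ l / 2}

/-- A Whitney square decomposition of an open set `D ⊆ ℂ`: a collection of squares
(encoded as center/side-length pairs) with pairwise disjoint interiors covering `D`, whose
side lengths are comparable to their distance to `∂D`. -/
structure IsWhitneyDecomposition (D : Set ℂ) (𝒲 : Set (ℂ × ℝ)) : Prop where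
  len_pos : ∀ q ∈ 𝒲, 0 < q.2
  sq_subset : ∀ q ∈ 𝒲, squareSet q.1 q.2 ⊆ D
  covers : D ⊆ ⋃ q ∈ 𝒲, squareSet q.1 q.2
  disj : ∀ q ∈ 𝒲, ∀ q' ∈ 𝒲, q ≠ q' →
    Disjoint (interior (squareSet q.1 q.2)) (interior (squareSet q'.1 q'.2))
  comparable : ∀ q ∈ 𝒲,
    q.2 ≤ Metric.infDist q.1 Dᶜ ∧ Metric.infDist q.1 Dᶜ ≤ 8 * q.2

lemma monotone_expNegInvGlue : Monotone expNegInvGlue := by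
  intro x y hxy
  unfold expNegInvGlue
  by_cases hy : y ≤ 0
  · rw [if_pos (hxy.trans hy), if_pos hy]
  · rw [if_neg hy]
    by_cases hx : x ≤ 0
    · rw [if_pos hx]; positivity
    · rw [if_neg hx]
      push_neg at hx hy
      apply Real.exp_le_exp.2
      simp only [neg_le_neg_iff]
      exact inv_anti₀ hx hxy

lemma monotone_smoothTransition : Monotone Real.smoothTransition := by
  intro x y hxy
  unfold Real.smoothTransition
  have h1 : expNegInvGlue x ≤ expNegInvGlue y := monotone_expNegInvGlue hxy
  have h2 : expNegInvGlue (1 - y) ≤ expNegInvGlue (1 - x) := monotone_expNegInvGlue (by linarith)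
  have hax : 0 ≤ expNegInvGlue x := expNegInvGlue.nonneg x
  have hby : 0 ≤ expNegInvGlue (1 - y) := expNegInvGlue.nonneg _
  have hdx : 0 < expNegInvGlue x + expNegInvGlue (1 - x) := Real.smoothTransition.pos_denom x
  have hdy : 0 < expNegInvGlue y + expNegInvGlue (1 - y) := Real.smoothTransition.pos_denom y
  rw [div_le_div_iff₀ hdx hdy]
  nlinarith

lemma deriv_nonneg_of_monotone {f : ℝ → ℝ} {d x : ℝ} (hm : Monotone f)
    (hd : HasDerivAt f d x) : 0 ≤ d := by
  have h := hasDerivAt_iff_tendsto_slope.1 hd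
  have h' : Tendsto (slope f x) (𝓝[>] x) (𝓝 d) :=
    h.mono_left (nhdsWithin_mono x (fun y hy => ne_of_gt hy))
  refine ge_of_tendsto h' ?_
  filter_upwards [self_mem_nhdsWithin] with y hy
  have h1 : f x ≤ f y := hm (le_of_lt hy)
  have h2 : (0:ℝ) < y - x := by simp only [mem_Ioi] at hy; linarith
  rw [slope_def_field]
  exact div_nonneg (by linarith) h2.le

lemma hypDistDisk_le_log {u v : ℂ} (hu : u ∈ Metric.ball (0:ℂ) 1)
    (hv : v ∈ Metric.ball (0:ℂ) 1) :
    hypDistDisk u v ≤ -Real.log (1 - ‖u‖) - Real.log (1 - ‖v‖) := by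
  rw [mem_ball_zero_iff] at hu hv
  set st := Real.smoothTransition with hst
  have st_diff : ∀ s : ℝ, HasDerivAt st (deriv st s) s := fun s =>
    ((Real.smoothTransition.contDiff (n := 1)).differentiable (by norm_num) s).hasDerivAt
  have dst_nonneg : ∀ s : ℝ, 0 ≤ deriv st s := fun s =>
    deriv_nonneg_of_monotone monotone_smoothTransition (st_diff s)
  have dst_cont : Continuous (deriv st) :=
    (Real.smoothTransition.contDiff (n := 2)).continuous_deriv one_le_two
  set f : ℝ → ℝ := fun t => st (1 - 2 * t) with hfdef
  set g : ℝ → ℝ := fun t => st (2 * t - 1) with hgdef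
  set df : ℝ → ℝ := fun t => deriv st (1 - 2 * t) * (-2) with hdfdef
  set dg : ℝ → ℝ := fun t => deriv st (2 * t - 1) * 2 with hdgdef
  have hinner1 : ∀ t : ℝ, HasDerivAt (fun t : ℝ => 1 - 2 * t) (-2) t := fun t => by
    simpa using ((hasDerivAt_id t).const_mul (2:ℝ)).const_sub 1
  have hinner2 : ∀ t : ℝ, HasDerivAt (fun t : ℝ => 2 * t - 1) 2 t := fun t => by
    simpa using ((hasDerivAt_id t).const_mul (2:ℝ)).sub_const 1
  have hf : ∀ t : ℝ, HasDerivAt f (df t) t := fun t =>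
    by have := (st_diff (1 - 2 * t)).comp t (hinner1 t); exact this
  have hg : ∀ t : ℝ, HasDerivAt g (dg t) t := fun t =>
    by have := (st_diff (2 * t - 1)).comp t (hinner2 t); exact this
  have hdf_np : ∀ t : ℝ, df t ≤ 0 := fun t =>
    mul_nonpos_of_nonneg_of_nonpos (dst_nonneg _) (by norm_num)
  have hdg_nn : ∀ t : ℝ, 0 ≤ dg t := fun t => mul_nonneg (dst_nonneg _) (by norm_num)
  have hf_mem : ∀ t : ℝ, 0 ≤ f t ∧ f t ≤ 1 :=
    fun t => ⟨Real.smoothTransition.nonneg _, Real.smoothTransition.le_one _⟩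
  have hg_mem : ∀ t : ℝ, 0 ≤ g t ∧ g t ≤ 1 :=
    fun t => ⟨Real.smoothTransition.nonneg _, Real.smoothTransition.le_one _⟩
  set γ : ℝ → ℂ := fun t => f t • u + g t • v with hγdef
  have hγd : ∀ t : ℝ, HasDerivAt γ (df t • u + dg t • v) t := fun t =>
    ((hf t).smul_const u).add ((hg t).smul_const v)
  have hderivγ : ∀ t : ℝ, deriv γ t = df t • u + dg t • v := fun t => (hγd t).deriv
  -- values
  have hgz : ∀ t : ℝ, t ≤ 1/2 → g t = 0 := fun t ht =>
    Real.smoothTransition.zero_of_nonpos (by linarith)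
  have hfz : ∀ t : ℝ, 1/2 ≤ t → f t = 0 := fun t ht =>
    Real.smoothTransition.zero_of_nonpos (by linarith)
  have hnu : 0 ≤ ‖u‖ := norm_nonneg u
  have hnv : 0 ≤ ‖v‖ := norm_nonneg v
  have hγball : ∀ t : ℝ, ‖γ t‖ < 1 := by
    intro t
    rcases le_or_gt t (1/2) with ht | ht
    · have : γ t = f t • u := by rw [hγdef]; simp [hgz t ht]
      rw [this, norm_smul, Real.norm_eq_abs, _root_.abs_of_nonneg (hf_mem t).1]
      calc f t * ‖u‖ ≤ 1 * ‖u‖ := by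
            apply mul_le_mul_of_nonneg_right (hf_mem t).2 hnu
        _ < 1 := by simpa using hu
    · have : γ t = g t • v := by rw [hγdef]; simp [hfz t ht.le]
      rw [this, norm_smul, Real.norm_eq_abs, _root_.abs_of_nonneg (hg_mem t).1]
      calc g t * ‖v‖ ≤ 1 * ‖v‖ := by
            apply mul_le_mul_of_nonneg_right (hg_mem t).2 hnv
        _ < 1 := by simpa using hv
  have hγ0 : γ 0 = u := by
    rw [hγdef]
    have h1 : f 0 = 1 := Real.smoothTransition.one_of_one_le (by norm_num)
    have h2 : g 0 = 0 := hgz 0 (by norm_num)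
    simp [h1, h2]
  have hγ1 : γ 1 = v := by
    rw [hγdef]
    have h1 : f 1 = 0 := hfz 1 (by norm_num)
    have h2 : g 1 = 1 := Real.smoothTransition.one_of_one_le (by norm_num)
    simp [h1, h2]
  have hγcd : ContDiffOn ℝ 1 γ (Set.Icc 0 1) := by
    apply ContDiff.contDiffOn
    have h1 : ContDiff ℝ 1 (fun t : ℝ => 1 - 2 * t) := by
      exact contDiff_const.sub (contDiff_const.mul contDiff_id)
    have h2 : ContDiff ℝ 1 (fun t : ℝ => 2 * t - 1) := by
      exact (contDiff_const.mul contDiff_id).sub contDiff_const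
    exact ((Real.smoothTransition.contDiff.comp h1).smul contDiff_const).add
      ((Real.smoothTransition.contDiff.comp h2).smul contDiff_const)
  -- denominators
  have hdenu : ∀ t : ℝ, 0 < 1 - f t * ‖u‖ := by
    intro t
    have : f t * ‖u‖ ≤ 1 * ‖u‖ := mul_le_mul_of_nonneg_right (hf_mem t).2 hnu
    nlinarith
  have hdenv : ∀ t : ℝ, 0 < 1 - g t * ‖v‖ := by
    intro t
    have : g t * ‖v‖ ≤ 1 * ‖v‖ := mul_le_mul_of_nonneg_right (hg_mem t).2 hnv
    nlinarith
  set G : ℝ → ℝ := fun t => Real.log (1 - f t * ‖u‖) - Real.log (1 - g t * ‖v‖) with hGdef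
  set Gd : ℝ → ℝ := fun t =>
    (-(df t * ‖u‖)) / (1 - f t * ‖u‖) - (-(dg t * ‖v‖)) / (1 - g t * ‖v‖) with hGddef
  have hG : ∀ t : ℝ, HasDerivAt G (Gd t) t := by
    intro t
    have h1 : HasDerivAt (fun t => 1 - f t * ‖u‖) (-(df t * ‖u‖)) t := by
      simpa using ((hf t).mul_const ‖u‖).const_sub 1
    have h2 : HasDerivAt (fun t => 1 - g t * ‖v‖) (-(dg t * ‖v‖)) t := by
      simpa using ((hg t).mul_const ‖v‖).const_sub 1
    exact ((h1.log (hdenu t).ne').sub (h2.log (hdenv t).ne'))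
  -- integrand
  set I : ℝ → ℝ := fun t => ‖deriv γ t‖ / (1 - ‖γ t‖ ^ 2) with hIdef
  have hIcont : Continuous I := by
    apply Continuous.div
    · have : Continuous (fun t => df t • u + dg t • v) := by
        apply Continuous.add
        · exact ((dst_cont.comp (continuous_const.sub ((continuous_const).mul continuous_id) : Continuous (fun t : ℝ => 1 - 2 * t))).mul continuous_const).smul continuous_const
        · exact ((dst_cont.comp (((continuous_const).mul continuous_id).sub continuous_const : Continuous (fun t : ℝ => 2 * t - 1))).mul continuous_const).smul continuous_const
      have heq : (fun t => ‖deriv γ t‖) = fun t => ‖df t • u + dg t • v‖ := by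
        funext t; rw [hderivγ t]
      rw [heq]
      exact this.norm
    · apply Continuous.sub continuous_const
      have : Continuous γ := by
        apply Continuous.add
        · exact (Real.smoothTransition.continuous.comp (continuous_const.sub ((continuous_const).mul continuous_id) : Continuous (fun t : ℝ => 1 - 2 * t))).smul continuous_const
        · exact (Real.smoothTransition.continuous.comp (((continuous_const).mul continuous_id).sub continuous_const : Continuous (fun t : ℝ => 2 * t - 1))).smul continuous_const
      exact (this.norm).pow 2
    · intro t
      have := hγball t
      nlinarith [norm_nonneg (γ t)]
  have hGdcont : Continuous Gd := by
    have c1 : Continuous df := (dst_cont.comp (continuous_const.sub ((continuous_const).mul continuous_id) : Continuous (fun t : ℝ => 1 - 2 * t))).mul continuous_const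
    have c2 : Continuous dg := (dst_cont.comp (((continuous_const).mul continuous_id).sub continuous_const : Continuous (fun t : ℝ => 2 * t - 1))).mul continuous_const
    have c3 : Continuous f := Real.smoothTransition.continuous.comp (continuous_const.sub ((continuous_const).mul continuous_id) : Continuous (fun t : ℝ => 1 - 2 * t))
    have c4 : Continuous g := Real.smoothTransition.continuous.comp (((continuous_const).mul continuous_id).sub continuous_const : Continuous (fun t : ℝ => 2 * t - 1))
    apply Continuous.sub
    · exact ((c1.mul continuous_const).neg).div (continuous_const.sub (c3.mul continuous_const))
        (fun t => (hdenu t).ne')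
    · exact ((c2.mul continuous_const).neg).div (continuous_const.sub (c4.mul continuous_const))
        (fun t => (hdenv t).ne')
  -- pointwise bound
  have hpt : ∀ t ∈ Set.Icc (0:ℝ) 1, I t ≤ Gd t := by
    intro t _
    rw [hIdef, hGddef]
    simp only
    rw [hderivγ t]
    rcases lt_trichotomy t (1/2) with ht | ht | ht
    · -- g ≡ 0 near t
      have hdg0 : dg t = 0 := by
        have : deriv st (2 * t - 1) = 0 := by
          have hev : st =ᶠ[𝓝 (2 * t - 1)] (fun _ => 0) := by
            filter_upwards [Iio_mem_nhds (show 2 * t - 1 < 0 by linarith)] with s hs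
            exact Real.smoothTransition.zero_of_nonpos (le_of_lt hs)
          rw [hev.deriv_eq]; simp
        rw [hdgdef]; simp [this]
      have hg0 : g t = 0 := hgz t ht.le
      have he : γ t = f t • u := by rw [hγdef]; simp [hg0]
      rw [hdg0, hg0, he]
      simp only [zero_smul, add_zero, mul_zero, zero_mul, neg_zero, zero_div, sub_zero]
      have h1 : ‖df t • u‖ = -df t * ‖u‖ := by
        rw [norm_smul, Real.norm_eq_abs, _root_.abs_of_nonpos (hdf_np t)]
      have h2 : ‖f t • u‖ = f t * ‖u‖ := by
        rw [norm_smul, Real.norm_eq_abs, _root_.abs_of_nonneg (hf_mem t).1]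
      rw [h1, h2, show -(df t * ‖u‖) = -df t * ‖u‖ by ring]
      have hx : 0 ≤ f t * ‖u‖ := mul_nonneg (hf_mem t).1 hnu
      have hx1 : f t * ‖u‖ < 1 := by linarith [hdenu t]
      have hkey : 1 - f t * ‖u‖ ≤ 1 - (f t * ‖u‖) ^ 2 := by nlinarith
      exact div_le_div_of_nonneg_left (mul_nonneg (by linarith [hdf_np t]) hnu) (hdenu t) hkey
    · -- t = 1/2
      have hf2 : f t = 0 := hfz t (le_of_eq ht.symm)
      have hg2 : g t = 0 := hgz t (le_of_eq ht)
      have hγ2 : γ t = 0 := by rw [hγdef]; simp [hf2, hg2]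
      have hb : ‖df t • u + dg t • v‖ ≤ -df t * ‖u‖ + dg t * ‖v‖ := by
        refine (norm_add_le _ _).trans ?_
        rw [norm_smul, norm_smul, Real.norm_eq_abs, Real.norm_eq_abs,
          _root_.abs_of_nonpos (hdf_np t), _root_.abs_of_nonneg (hdg_nn t)]
      rw [hγ2, hf2, hg2, show ((1:ℝ) - ‖(0:ℂ)‖^2) = 1 by simp,
        show ((1:ℝ) - 0 * ‖u‖) = 1 by ring, show ((1:ℝ) - 0 * ‖v‖) = 1 by ring,
        div_one, div_one, div_one]
      linarith [hb]
    · -- f ≡ 0 near t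
      have hdf0 : df t = 0 := by
        have : deriv st (1 - 2 * t) = 0 := by
          have hev : st =ᶠ[𝓝 (1 - 2 * t)] (fun _ => 0) := by
            filter_upwards [Iio_mem_nhds (show 1 - 2 * t < 0 by linarith)] with s hs
            exact Real.smoothTransition.zero_of_nonpos (le_of_lt hs)
          rw [hev.deriv_eq]; simp
        rw [hdfdef]; simp [this]
      have hf0 : f t = 0 := hfz t ht.le
      have he : γ t = g t • v := by rw [hγdef]; simp [hf0]
      rw [hdf0, hf0, he]
      simp only [zero_smul, zero_add, mul_zero, zero_mul, neg_zero, zero_div, zero_sub, sub_zero]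
      have h1 : ‖dg t • v‖ = dg t * ‖v‖ := by
        rw [norm_smul, Real.norm_eq_abs, _root_.abs_of_nonneg (hdg_nn t)]
      have h2 : ‖g t • v‖ = g t * ‖v‖ := by
        rw [norm_smul, Real.norm_eq_abs, _root_.abs_of_nonneg (hg_mem t).1]
      rw [h1, h2, show -(-(dg t * ‖v‖) / (1 - g t * ‖v‖)) = dg t * ‖v‖ / (1 - g t * ‖v‖) by ring]
      have hx : 0 ≤ g t * ‖v‖ := mul_nonneg (hg_mem t).1 hnv
      have hx1 : g t * ‖v‖ < 1 := by linarith [hdenv t]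
      have hkey : 1 - g t * ‖v‖ ≤ 1 - (g t * ‖v‖) ^ 2 := by nlinarith
      exact div_le_div_of_nonneg_left (mul_nonneg (hdg_nn t) hnv) (hdenv t) hkey
  -- integral bound
  have hlen : hypLength γ ≤ G 1 - G 0 := by
    have h1 : hypLength γ = ∫ t in (0:ℝ)..1, I t := rfl
    have h2 : (∫ t in (0:ℝ)..1, Gd t) = G 1 - G 0 := by
      apply intervalIntegral.integral_eq_sub_of_hasDerivAt
      · intro t _
        exact hG t
      · exact hGdcont.intervalIntegrable 0 1
    rw [h1, ← h2]
    apply intervalIntegral.integral_mono_on (by norm_num)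
      (hIcont.intervalIntegrable 0 1) (hGdcont.intervalIntegrable 0 1) hpt
  have hGval : G 1 - G 0 = -Real.log (1 - ‖v‖) - Real.log (1 - ‖u‖) := by
    have h1 : f 1 = 0 := hfz 1 (by norm_num)
    have h2 : g 1 = 1 := Real.smoothTransition.one_of_one_le (by norm_num)
    have h3 : f 0 = 1 := Real.smoothTransition.one_of_one_le (by norm_num)
    have h4 : g 0 = 0 := hgz 0 (by norm_num)
    rw [hGdef]; simp [h1, h2, h3, h4]
  -- conclude
  have hmem : hypLength γ ∈ {L : ℝ | ∃ γ : ℝ → ℂ, ContDiffOn ℝ 1 γ (Set.Icc 0 1) ∧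
      (∀ t ∈ Set.Icc (0 : ℝ) 1, γ t ∈ Metric.ball (0 : ℂ) 1) ∧
      γ 0 = u ∧ γ 1 = v ∧ L = hypLength γ} :=
    ⟨γ, hγcd, fun t _ => mem_ball_zero_iff.2 (hγball t), hγ0, hγ1, rfl⟩
  have hbdd : BddBelow {L : ℝ | ∃ γ : ℝ → ℂ, ContDiffOn ℝ 1 γ (Set.Icc 0 1) ∧
      (∀ t ∈ Set.Icc (0 : ℝ) 1, γ t ∈ Metric.ball (0 : ℂ) 1) ∧
      γ 0 = u ∧ γ 1 = v ∧ L = hypLength γ} := by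
    refine ⟨0, fun L hL => ?_⟩
    obtain ⟨γ', _, hball', _, _, hLe⟩ := hL
    rw [hLe]
    apply intervalIntegral.integral_nonneg (by norm_num)
    intro s hs
    have hb := mem_ball_zero_iff.1 (hball' s hs)
    have : 0 < 1 - ‖γ' s‖ ^ 2 := by nlinarith [norm_nonneg (γ' s)]
    positivity
  calc hypDistDisk u v ≤ hypLength γ := csInf_le hbdd hmem
    _ ≤ G 1 - G 0 := hlen
    _ = -Real.log (1 - ‖u‖) - Real.log (1 - ‖v‖) := by rw [hGval]; ring


lemma exists_holo_inverse (D : Set ℂ) (hDopen : IsOpen D)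
    (φ : ℂ → ℂ)
    (hφcont : ContinuousOn φ (closedBall (0 : ℂ) 1))
    (hφdiff : DifferentiableOn ℂ φ (ball (0 : ℂ) 1))
    (hφinj : Set.InjOn φ (closedBall (0 : ℂ) 1))
    (hφim : φ '' ball (0 : ℂ) 1 = D)
    (hφbd : φ '' sphere (0 : ℂ) 1 = frontier D)
    (hd0 : deriv φ 0 ≠ 0) :
    ∃ ψ : ℂ → ℂ, (∀ x ∈ D, ψ x ∈ ball (0:ℂ) 1 ∧ φ (ψ x) = x ∧ DifferentiableAt ℂ ψ x) ∧
      (∀ w ∈ closedBall (0:ℂ) 1, φ w ∈ D → ψ (φ w) = w) := by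
  classical
  set K := closedBall (0:ℂ) 1 with hKdef
  have hK : IsCompact K := isCompact_closedBall 0 1
  haveI : CompactSpace K := isCompact_iff_compactSpace.1 hK
  set e : K ≃ (φ '' K : Set ℂ) := Equiv.Set.imageOfInjOn φ K hφinj with hedef
  have hecont : Continuous (e : K → (φ '' K : Set ℂ)) := by
    apply Continuous.subtype_mk
    exact hφcont.restrict
  set ho : K ≃ₜ (φ '' K : Set ℂ) := Continuous.homeoOfEquivCompactToT2 hecont with hhodef
  set ψ : ℂ → ℂ := fun x => if h : x ∈ φ '' K then ((ho.symm ⟨x, h⟩ : K) : ℂ) else 0 with hψdef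
  have hψval : ∀ x (h : x ∈ φ '' K), ψ x = ((ho.symm ⟨x, h⟩ : K) : ℂ) := by
    intro x h; rw [hψdef]; simp [h]
  have hψK : ∀ x (h : x ∈ φ '' K), ψ x ∈ K := by
    intro x h; rw [hψval x h]; exact (ho.symm ⟨x, h⟩).2
  have hφψ : ∀ x (h : x ∈ φ '' K), φ (ψ x) = x := by
    intro x h
    rw [hψval x h]
    have h2 : ho (ho.symm ⟨x, h⟩) = ⟨x, h⟩ := ho.apply_symm_apply _
    have h3 : (ho (ho.symm ⟨x, h⟩) : ℂ) = φ ((ho.symm ⟨x, h⟩ : K) : ℂ) := rfl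
    rw [h2] at h3
    exact h3.symm
  have hψφ : ∀ w ∈ K, φ w ∈ D → ψ (φ w) = w := by
    intro w hw _
    have hmem : φ w ∈ φ '' K := mem_image_of_mem φ hw
    exact hφinj (hψK _ hmem) hw (hφψ _ hmem)
  have hDsub : D ⊆ φ '' K := by
    rw [← hφim]; exact image_mono ball_subset_closedBall
  have hnhds : ∀ x ∈ D, φ '' K ∈ 𝓝 x := fun x hx =>
    Filter.mem_of_superset (hDopen.mem_nhds hx) hDsub
  have hcontOn : ContinuousOn ψ (φ '' K) := by
    rw [continuousOn_iff_continuous_restrict]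
    have : (φ '' K).domRestrict ψ = fun p => ((ho.symm p : K) : ℂ) := by
      funext p
      exact hψval p.1 p.2
    rw [this]
    exact continuous_subtype_val.comp ho.symm.continuous
  have hψcontAt : ∀ x ∈ D, ContinuousAt ψ x := fun x hx =>
    hcontOn.continuousAt (hnhds x hx)
  have hψball : ∀ x ∈ D, ψ x ∈ ball (0:ℂ) 1 := by
    intro x hx
    have hxK := hψK x (hDsub hx)
    by_contra hnb
    have h1 : ‖ψ x‖ ≤ 1 := by simpa [hKdef, mem_closedBall, dist_zero_right] using hxK
    have h2 : ¬ ‖ψ x‖ < 1 := by simpa [mem_ball, dist_zero_right] using hnb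
    have h3 : ψ x ∈ sphere (0:ℂ) 1 := by
      simp only [mem_sphere, dist_zero_right]
      linarith
    have h4 : φ (ψ x) ∈ frontier D := by
      rw [← hφbd]; exact mem_image_of_mem φ h3
    rw [hφψ x (hDsub hx)] at h4
    rw [hDopen.frontier_eq] at h4
    exact h4.2 hx
  -- analyticity facts
  have hφan : AnalyticOnNhd ℂ φ (ball (0:ℂ) 1) := hφdiff.analyticOnNhd isOpen_ball
  have hdan : AnalyticOnNhd ℂ (deriv φ) (ball (0:ℂ) 1) := hφan.deriv
  have hzeros : ∀ w ∈ ball (0:ℂ) 1, ∀ᶠ w' in 𝓝[≠] w, deriv φ w' ≠ 0 := by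
    intro w hw
    rcases (hdan w hw).eventually_eq_zero_or_eventually_ne_zero with h | h
    · exfalso
      have heq : EqOn (deriv φ) (fun _ => 0) (ball (0:ℂ) 1) := by
        apply hdan.eqOn_of_preconnected_of_eventuallyEq analyticOnNhd_const
          (convex_ball (0:ℂ) 1).isPreconnected hw
        exact h
      exact hd0 (heq (mem_ball_self one_pos))
    · exact h
  have hgood : ∀ x ∈ D, deriv φ (ψ x) ≠ 0 → DifferentiableAt ℂ ψ x := by
    intro x hx hne
    have hψx := hψball x hx
    have hφd : HasDerivAt φ (deriv φ (ψ x)) (ψ x) :=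
      (hφdiff.differentiableAt (isOpen_ball.mem_nhds hψx)).hasDerivAt
    have hev : ∀ᶠ y in 𝓝 x, φ (ψ y) = y := by
      filter_upwards [hDopen.mem_nhds hx] with y hy
      exact hφψ y (hDsub hy)
    exact (HasDerivAt.of_local_left_inverse (hψcontAt x hx) hφd hne hev).differentiableAt
  have hdiffAt : ∀ x ∈ D, DifferentiableAt ℂ ψ x := by
    intro x hx
    by_cases hne : deriv φ (ψ x) ≠ 0
    · exact hgood x hx hne
    · push_neg at hne
      have h1 : ∀ᶠ y in 𝓝[≠] x, DifferentiableAt ℂ ψ y := by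
        have hz := hzeros (ψ x) (hψball x hx)
        rw [eventually_nhdsWithin_iff] at hz
        have hz' : ∀ᶠ y in 𝓝 x, ψ y ∈ ball (0:ℂ) 1 → (ψ y ≠ ψ x → deriv φ (ψ y) ≠ 0) := by
          have := (hψcontAt x hx).tendsto.eventually hz
          filter_upwards [this] with y hy _ hyne
          exact hy (by simpa using hyne)
        have hD : ∀ᶠ y in 𝓝 x, y ∈ D := hDopen.mem_nhds hx
        rw [eventually_nhdsWithin_iff]
        filter_upwards [hz', hD] with y hy hyD hyne
        have hyx : y ≠ x := by simpa using hyne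
        have hψyb : ψ y ∈ ball (0:ℂ) 1 := hψball y hyD
        have hψne : ψ y ≠ ψ x := by
          intro hcon
          apply hyx
          have := congrArg φ hcon
          rwa [hφψ y (hDsub hyD), hφψ x (hDsub hx)] at this
        exact hgood y hyD (hy hψyb hψne)
      exact (Complex.analyticAt_of_differentiable_on_punctured_nhds_of_continuousAt
        h1 (hψcontAt x hx)).differentiableAt
  exact ⟨ψ, fun x hx => ⟨hψball x hx, hφψ x (hDsub hx), hdiffAt x hx⟩, hψφ⟩


lemma mobius_normSq (v p : ℂ) :
    normSq (1 - (starRingEnd ℂ) v * p) - normSq (p - v) = (1 - normSq v) * (1 - normSq p) := by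
  simp only [Complex.normSq_apply, Complex.sub_re, Complex.sub_im, Complex.mul_re, Complex.mul_im,
    Complex.one_re, Complex.one_im, Complex.conj_re, Complex.conj_im]
  ring

lemma mobius_den_ne {v p : ℂ} (hv : ‖v‖ < 1) (hp : ‖p‖ < 1) :
    (1 : ℂ) - (starRingEnd ℂ) v * p ≠ 0 := by
  intro h
  have h1 : (1:ℂ) = (starRingEnd ℂ) v * p := by linear_combination h
  have h2 : (1:ℝ) = ‖(starRingEnd ℂ) v * p‖ := by rw [← h1]; simp
  rw [norm_mul] at h2
  simp only [RCLike.norm_conj] at h2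
  nlinarith [norm_nonneg v, norm_nonneg p]

lemma mobius_lt_one {v p : ℂ} (hv : ‖v‖ < 1) (hp : ‖p‖ < 1) :
    ‖(p - v) / (1 - (starRingEnd ℂ) v * p)‖ < 1 := by
  have hden := mobius_den_ne hv hp
  have hdenpos : 0 < ‖(1:ℂ) - (starRingEnd ℂ) v * p‖ := norm_pos_iff.2 hden
  rw [norm_div, div_lt_one hdenpos]
  have hid := mobius_normSq v p
  rw [Complex.normSq_eq_norm_sq, Complex.normSq_eq_norm_sq, Complex.normSq_eq_norm_sq, Complex.normSq_eq_norm_sq] at hid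
  have h1 : 0 < 1 - ‖v‖^2 := by nlinarith [norm_nonneg v]
  have h2 : 0 < 1 - ‖p‖^2 := by nlinarith [norm_nonneg p]
  have h3 : ‖p - v‖^2 < ‖(1:ℂ) - (starRingEnd ℂ) v * p‖^2 := by nlinarith [mul_pos h1 h2]
  exact lt_of_pow_lt_pow_left₀ 2 (norm_nonneg _) h3

lemma mobius_dist_bound {v p : ℂ} (hv : ‖v‖ < 1) (hp : ‖p‖ < 1)
    (h : ‖(p - v) / (1 - (starRingEnd ℂ) v * p)‖ ≤ 3/4) :
    (1 - ‖p‖) / 32 ≤ 1 - ‖v‖ := by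
  have hden := mobius_den_ne hv hp
  have hdenpos : 0 < ‖(1:ℂ) - (starRingEnd ℂ) v * p‖ := norm_pos_iff.2 hden
  rw [norm_div, div_le_iff₀ hdenpos] at h
  have hid := mobius_normSq v p
  rw [Complex.normSq_eq_norm_sq, Complex.normSq_eq_norm_sq, Complex.normSq_eq_norm_sq, Complex.normSq_eq_norm_sq] at hid
  set A := ‖p‖
  set B := ‖v‖
  set X := ‖(1:ℂ) - (starRingEnd ℂ) v * p‖
  set Y := ‖p - v‖
  have hA0 : 0 ≤ A := norm_nonneg _
  have hB0 : 0 ≤ B := norm_nonneg _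
  have hY0 : 0 ≤ Y := norm_nonneg _
  have hXlb : 1 - B * A ≤ X := by
    have h1 : ‖(starRingEnd ℂ) v * p‖ = B * A := by
      rw [norm_mul]; simp only [RCLike.norm_conj]; rfl
    calc 1 - B * A = ‖(1:ℂ)‖ - ‖(starRingEnd ℂ) v * p‖ := by rw [h1]; simp
      _ ≤ X := norm_sub_norm_le _ _
  have hXlb2 : 1 - A ≤ X := by nlinarith
  have hY2 : Y ^ 2 ≤ (9/16) * X ^ 2 := by nlinarith
  have hkey : (1 - B^2) * (1 - A^2) ≥ (7/16) * (1 - A)^2 := by nlinarith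
  have hA1 : 0 < 1 - A := by linarith
  have hB2 : 0 ≤ 1 - B^2 := by nlinarith [mobius_normSq v p, Complex.normSq_eq_norm_sq (1 - (starRingEnd ℂ) v * p), Complex.normSq_eq_norm_sq (p - v), Complex.normSq_eq_norm_sq v, Complex.normSq_eq_norm_sq p]
  have h5 : 2 * (1 - B^2) * (1 - A) ≥ (7/16) * (1 - A)^2 := by nlinarith
  have h6 : 1 - B^2 ≥ 7/32 * (1 - A) := by nlinarith [mul_pos hA1 hA1]
  have h7 : 1 - B ≥ (1 - B^2) / 2 := by nlinarith
  linarith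

lemma schwarz_pseudohyp {D : Set ℂ} {φ ψ : ℂ → ℂ}
    (hψ : ∀ x ∈ D, ψ x ∈ ball (0:ℂ) 1 ∧ φ (ψ x) = x ∧ DifferentiableAt ℂ ψ x)
    {v p : ℂ} (hv : v ∈ ball (0:ℂ) 1) (hp : p ∈ ball (0:ℂ) 1)
    {c : ℂ} {d : ℝ} (hd : 0 < d) (hball : ball c d ⊆ D)
    (hψc : ψ c = v) (hψp : ψ (φ p) = p) (hφp : φ p ∈ ball c d) :
    ‖(p - v) / (1 - (starRingEnd ℂ) v * p)‖ ≤ ‖φ p - c‖ / d := by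
  rw [mem_ball_zero_iff] at hv hp
  set h : ℂ → ℂ := fun x => (ψ x - v) / (1 - (starRingEnd ℂ) v * ψ x) with hhdef
  have hcmem : c ∈ ball c d := mem_ball_self hd
  have hdiff : DifferentiableOn ℂ h (ball c d) := by
    intro x hx
    have hxD := hball hx
    obtain ⟨hb, -, hdiff⟩ := hψ x hxD
    rw [mem_ball_zero_iff] at hb
    apply DifferentiableAt.differentiableWithinAt
    exact ((hdiff.sub_const v).div ((differentiableAt_const _).sub
      ((differentiableAt_const _).mul hdiff)) (mobius_den_ne hv hb))
  have hc0 : h c = 0 := by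
    rw [hhdef]; simp only [hψc]; simp
  have hmaps : MapsTo h (ball c d) (ball (h c) 1) := by
    intro x hx
    rw [hc0, mem_ball_zero_iff]
    obtain ⟨hb, -, -⟩ := hψ x (hball hx)
    rw [mem_ball_zero_iff] at hb
    exact mobius_lt_one hv hb
  have hsch := Complex.norm_dslope_le_div_of_mapsTo_ball hdiff (hmaps.mono_right ball_subset_closedBall) hφp
  by_cases hne : φ p = c
  · have hpv : p = v := by rw [← hψp, hne, hψc]
    rw [hpv]
    simp only [sub_self, zero_div, norm_zero]
    positivity
  · rw [dslope_of_ne h hne, slope_def_field, hc0, sub_zero] at hsch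
    have hval : h (φ p) = (p - v) / (1 - (starRingEnd ℂ) v * p) := by
      rw [hhdef]; simp only [hψp]
    have hnorm : ‖h (φ p) / (φ p - c)‖ = ‖h (φ p)‖ / ‖φ p - c‖ := norm_div _ _
    rw [hnorm, hval] at hsch
    have hpc : 0 < ‖φ p - c‖ := by
      rw [norm_pos_iff]
      exact sub_ne_zero.2 hne
    rw [div_le_div_iff₀ hpc hd] at hsch
    rw [le_div_iff₀ hd]
    linarith


lemma holder_dist_le {C : ℝ≥0} {r : ℝ≥0} {f : ℂ → ℂ} {s : Set ℂ} (h : HolderOnWith C r f s)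
    {x y : ℂ} (hx : x ∈ s) (hy : y ∈ s) : dist (f x) (f y) ≤ C * dist x y ^ (r : ℝ) := by
  have h1 := h.edist_le hx hy
  rw [edist_dist, edist_dist, ENNReal.ofReal_rpow_of_nonneg dist_nonneg r.coe_nonneg,
    ← ENNReal.ofReal_coe_nnreal, ← ENNReal.ofReal_mul C.coe_nonneg] at h1
  rw [← ENNReal.ofReal_le_ofReal_iff (by positivity)]
  exact h1

/-- **Hyperbolic distance bound for Whitney squares hit by geodesics to a Hölder boundary
set.**  `D` is a bounded Jordan domain (encoded via the boundary extension of the Riemann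
map: `φ` maps the closed disk homeomorphically, is conformal inside, maps the open disk
onto `D` and the unit circle onto `∂D`), `z = φ 0 ∈ D`, `φ' 0 > 0`, and `X ⊆ ∂D` is a
nonempty set such that `φ` is `β`-Hölder on the `δ`-neighborhood `W` in the disk of
`φ⁻¹ X ⊆ ∂𝔻`.  `𝒲` is a Whitney square decomposition of `D` and `Q0 ∈ 𝒲` contains `z`.
Then for each `a ∈ (0,1)` there is `M > 0` such that whenever `w ∈ X` and the hyperbolic
geodesic in `D` from `z` to `w` (the image under `φ` of the radial geodesic `t ↦ tanh t • ζ`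
towards `ζ ∈ ∂𝔻` with `φ ζ = w`) passes through some `Q ∈ 𝒲`, the hyperbolic distance in
`D` between `cen Q0` and `cen Q` (i.e. the hyperbolic distance in `𝔻` between their
preimages under `φ`) is at most `M * (len Q) ^ (-a)`. -/
theorem whitney_geodesic_distance_bound
    (D : Set ℂ) (hDopen : IsOpen D) (hDbd : Bornology.IsBounded D)
    (z : ℂ) (hz : z ∈ D)
    (φ : ℂ → ℂ)
    (hφcont : ContinuousOn φ (closedBall (0 : ℂ) 1))
    (hφdiff : DifferentiableOn ℂ φ (ball (0 : ℂ) 1))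
    (hφinj : Set.InjOn φ (closedBall (0 : ℂ) 1))
    (hφim : φ '' ball (0 : ℂ) 1 = D)
    (hφbd : φ '' sphere (0 : ℂ) 1 = frontier D)
    (hφ0 : φ 0 = z)
    (hφ'0 : (deriv φ 0).im = 0 ∧ 0 < (deriv φ 0).re)
    (X : Set ℂ) (hXne : X.Nonempty) (hXsub : X ⊆ frontier D)
    (δ β : ℝ) (hδ : δ ∈ Set.Ioo (0 : ℝ) 1) (hβ : β ∈ Set.Ioo (0 : ℝ) 1)
    (hHolder : ∃ C : ℝ≥0, HolderOnWith C β.toNNReal φ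
      {w ∈ ball (0 : ℂ) 1 | Metric.infDist w (sphere (0 : ℂ) 1 ∩ φ ⁻¹' X) < δ})
    (𝒲 : Set (ℂ × ℝ)) (h𝒲 : IsWhitneyDecomposition D 𝒲)
    (Q0 : ℂ × ℝ) (hQ0 : Q0 ∈ 𝒲) (hzQ0 : z ∈ squareSet Q0.1 Q0.2)
    (a : ℝ) (ha : a ∈ Set.Ioo (0 : ℝ) 1) :
    ∃ M : ℝ, 0 < M ∧ ∀ w ∈ X, ∀ Q ∈ 𝒲,
      (∃ ζ ∈ sphere (0 : ℂ) 1, φ ζ = w ∧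
        ∃ t : ℝ, 0 ≤ t ∧ φ (Real.tanh t • ζ) ∈ squareSet Q.1 Q.2) →
      ∀ u ∈ ball (0 : ℂ) 1, ∀ v ∈ ball (0 : ℂ) 1,
        φ u = Q0.1 → φ v = Q.1 → hypDistDisk u v ≤ M * Q.2 ^ (-a) := by

  classical
  obtain ⟨C, hHolderC⟩ := hHolder
  have hβ0 : (0:ℝ) < β := hβ.1
  have hβ1 : β < 1 := hβ.2
  have ha0 : (0:ℝ) < a := ha.1
  have hδ0 : (0:ℝ) < δ := hδ.1
  have hδ1 : δ < 1 := hδ.2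
  -- nonvanishing derivative at 0
  have hd0 : deriv φ 0 ≠ 0 := by
    intro h
    rw [h] at hφ'0
    simp at hφ'0
  obtain ⟨ψ, hψ, hψφ⟩ := exists_holo_inverse D hDopen φ hφcont hφdiff hφinj hφim hφbd hd0
  -- bound on the domain
  obtain ⟨R, hR⟩ := hDbd.subset_closedBall 0
  set R' : ℝ := max R 0 + 1 with hR'def
  have hR'1 : 1 ≤ R' := by
    have := le_max_right R 0
    simp only [hR'def]
    linarith
  have hDR : D ⊆ closedBall 0 (R' - 1) := by
    intro x hx
    have := hR hx
    simp only [mem_closedBall, dist_zero_right] at this ⊢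
    have h2 := le_max_left R 0
    simp only [hR'def]
    linarith
  have hy₀ : (R' : ℂ) ∈ Dᶜ := by
    intro hmem
    have := hDR hmem
    simp only [mem_closedBall, dist_zero_right, Complex.norm_real, Real.norm_eq_abs] at this
    rw [_root_.abs_of_nonneg (by linarith)] at this
    linarith
  set Lmax : ℝ := 2 * R' with hLmaxdef
  have hLen_bound : ∀ Q ∈ 𝒲, Q.2 ≤ Lmax := by
    intro Q hQ
    have hQc : Q.1 ∈ squareSet Q.1 Q.2 := by
      constructor <;> · simp only [sub_self, abs_zero]; linarith [h𝒲.len_pos Q hQ]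
    have hQD : Q.1 ∈ D := h𝒲.sq_subset Q hQ hQc
    have h1 : Q.2 ≤ infDist Q.1 Dᶜ := (h𝒲.comparable Q hQ).1
    have h2 : infDist Q.1 Dᶜ ≤ dist Q.1 (R' : ℂ) := infDist_le_dist_of_mem hy₀
    have h3 : dist Q.1 (R' : ℂ) ≤ ‖Q.1‖ + R' := by
      calc dist Q.1 (R' : ℂ) ≤ ‖Q.1‖ + ‖(R' : ℂ)‖ := by
            rw [dist_eq_norm]; exact norm_sub_le _ _
        _ = ‖Q.1‖ + R' := by
            rw [Complex.norm_real, Real.norm_eq_abs, _root_.abs_of_nonneg (by linarith)]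
    have h4 : ‖Q.1‖ ≤ R' - 1 := by
      have := hDR hQD
      simpa [mem_closedBall, dist_zero_right] using this
    simp only [hLmaxdef]
    linarith
  set CC : ℝ := (C : ℝ) + 1 + Lmax with hCCdef
  have hCC1 : 1 ≤ CC := by
    have := C.coe_nonneg
    simp only [hCCdef, hLmaxdef]
    linarith
  have hCCLmax : Lmax ≤ CC := by
    have := C.coe_nonneg
    simp only [hCCdef]; linarith
  have hCCC : (C : ℝ) ≤ CC := by
    simp only [hCCdef, hLmaxdef]; linarith
  have hCC0 : (0:ℝ) < CC := by linarith
  -- the fixed preimage of cen Q0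
  have hQ0c : Q0.1 ∈ squareSet Q0.1 Q0.2 := by
    constructor <;> · simp only [sub_self, abs_zero]; linarith [h𝒲.len_pos Q0 hQ0]
  have hQ01D : Q0.1 ∈ D := h𝒲.sq_subset Q0 hQ0 hQ0c
  obtain ⟨hu₀ball, hφu₀, -⟩ := hψ Q0.1 hQ01D
  set u₀ : ℂ := ψ Q0.1 with hu₀def
  have hu₀n : ‖u₀‖ < 1 := mem_ball_zero_iff.1 hu₀ball
  set A₀ : ℝ := -Real.log (1 - ‖u₀‖) with hA₀def
  have hA₀ : 0 ≤ A₀ := by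
    simp only [hA₀def, neg_nonneg]
    apply Real.log_nonpos <;> [linarith; linarith [norm_nonneg u₀]]
  set A : ℝ := A₀ + Real.log 32 + (-Real.log δ) + 1 with hAdef
  have hlog32 : (0:ℝ) ≤ Real.log 32 := Real.log_nonneg (by norm_num)
  have hlogδ : 0 ≤ -Real.log δ := by
    simp only [neg_nonneg]
    exact Real.log_nonpos (by linarith) (by linarith)
  have hA : 0 < A := by simp only [hAdef]; linarith
  set B : ℝ := 1 / β with hBdef
  have hB : 0 < B := by positivity
  set M : ℝ := (A + B / a + 1) * (4 * CC) ^ a with hMdef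
  have hM : 0 < M := by
    apply mul_pos (by positivity)
    exact Real.rpow_pos_of_pos (by linarith) a
  refine ⟨M, hM, ?_⟩
  rintro w hw Q hQ ⟨ζ, hζs, hφζ, t, ht0, hpQ⟩ u hu v hv hφu hφv
  set L : ℝ := Q.2 with hLdef
  have hL : 0 < L := h𝒲.len_pos Q hQ
  have hLLmax : L ≤ Lmax := hLen_bound Q hQ
  -- u is the fixed point u₀
  have hueq : u₀ = u := by
    have h1 : ψ (φ u) = u := hψφ u (ball_subset_closedBall hu) (by rw [hφu]; exact hQ01D)
    rw [hu₀def, ← hφu, h1]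
  -- basic facts about the geodesic point
  have hζn : ‖ζ‖ = 1 := mem_sphere_zero_iff_norm.1 hζs
  set T : ℝ := Real.tanh t with hTdef
  have hT0 : 0 ≤ T := by
    rw [hTdef, Real.tanh_eq_sinh_div_cosh]
    exact div_nonneg (Real.sinh_nonneg_iff.2 ht0) (Real.cosh_pos t).le
  have hT1 : T < 1 := by
    rw [hTdef, Real.tanh_eq_sinh_div_cosh, div_lt_one (Real.cosh_pos t)]
    exact Real.sinh_lt_cosh t
  set p : ℂ := Real.tanh t • ζ with hpdef
  have hpn : ‖p‖ = T := by
    rw [hpdef, norm_smul, Real.norm_eq_abs, _root_.abs_of_nonneg hT0, hζn, mul_one]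
  have hpball : p ∈ ball (0:ℂ) 1 := by
    rw [mem_ball_zero_iff, hpn]; exact hT1
  have hφpD : φ p ∈ D := h𝒲.sq_subset Q hQ hpQ
  -- distance from φ p to the center
  have hsq : dist (φ p) Q.1 ≤ 3/4 * L := by
    obtain ⟨h1, h2⟩ := hpQ
    rw [Complex.dist_eq, Complex.norm_def]
    have e1 : ((φ p) - Q.1).re = (φ p).re - Q.1.re := by simp
    have e2 : ((φ p) - Q.1).im = (φ p).im - Q.1.im := by simp
    have h3 : normSq ((φ p) - Q.1) ≤ (3/4*L)^2 := by
      rw [Complex.normSq_apply, e1, e2]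
      have k1 := abs_le.1 h1
      have k2 := abs_le.1 h2
      nlinarith
    calc Real.sqrt (normSq ((φ p) - Q.1)) ≤ Real.sqrt ((3/4*L)^2) := Real.sqrt_le_sqrt h3
      _ = 3/4*L := Real.sqrt_sq (by linarith)
  set d : ℝ := infDist Q.1 Dᶜ with hddef
  have hdL : L ≤ d := (h𝒲.comparable Q hQ).1
  have hd0' : 0 < d := lt_of_lt_of_le hL hdL
  have hballD : ball Q.1 d ⊆ D := by
    intro y hy
    by_contra hyD
    have h1 : infDist Q.1 Dᶜ ≤ dist Q.1 y := infDist_le_dist_of_mem hyD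
    rw [dist_comm] at h1
    rw [mem_ball] at hy
    rw [← hddef] at h1
    linarith
  have hφpball : φ p ∈ ball Q.1 d := by
    rw [mem_ball]
    calc dist (φ p) Q.1 ≤ 3/4 * L := hsq
      _ < L := by linarith
      _ ≤ d := hdL
  -- ψ facts
  have hQ1D : Q.1 ∈ D := by
    have hQc : Q.1 ∈ squareSet Q.1 Q.2 := by
      constructor <;> · simp only [sub_self, abs_zero]; linarith
    exact h𝒲.sq_subset Q hQ hQc
  have hψQ1 : ψ Q.1 = v := by
    have h1 : ψ (φ v) = v := hψφ v (ball_subset_closedBall hv) (by rw [hφv]; exact hQ1D)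
    rw [← hφv, h1]
  have hψφp : ψ (φ p) = p := hψφ p (ball_subset_closedBall hpball) hφpD
  -- Schwarz estimate
  have hmob : ‖(p - v) / (1 - (starRingEnd ℂ) v * p)‖ ≤ 3/4 := by
    have h1 := schwarz_pseudohyp hψ hv hpball hd0' hballD hψQ1 hψφp hφpball
    have h2 : ‖φ p - Q.1‖ / d ≤ 3/4 := by
      rw [div_le_iff₀ hd0']
      have h3 : ‖φ p - Q.1‖ ≤ 3/4 * L := by rw [← dist_eq_norm]; exact hsq
      nlinarith
    exact h1.trans h2
  have hvn : ‖v‖ < 1 := mem_ball_zero_iff.1 hv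
  have hvp : (1 - ‖p‖) / 32 ≤ 1 - ‖v‖ :=
    mobius_dist_bound hvn (by rw [hpn]; exact hT1) hmob
  -- Hölder estimate on 1 - T
  set ρ : ℝ := min δ ((L / (4 * CC)) ^ (1/β : ℝ)) with hρdef
  have hρ0 : 0 < ρ := by
    apply lt_min hδ0
    apply Real.rpow_pos_of_pos
    positivity
  have hTρ : ρ ≤ 1 - T := by
    rcases le_or_gt δ (1 - T) with hcase | hcase
    · exact le_trans (min_le_left _ _) hcase
    · -- Hölder case
      refine le_trans (min_le_right _ _) ?_
      -- W membership
      set W : Set ℂ := {w ∈ ball (0:ℂ) 1 | Metric.infDist w (sphere (0:ℂ) 1 ∩ φ ⁻¹' X) < δ}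
        with hWdef
      have hζX : ζ ∈ sphere (0:ℂ) 1 ∩ φ ⁻¹' X := ⟨hζs, by rw [mem_preimage, hφζ]; exact hw⟩
      have hWmem : ∀ s : ℝ, T ≤ s → s < 1 → (s • ζ : ℂ) ∈ W := by
        intro s hs1 hs2
        have hs0 : 0 ≤ s := le_trans hT0 hs1
        constructor
        · rw [mem_ball_zero_iff, norm_smul, Real.norm_eq_abs, _root_.abs_of_nonneg hs0, hζn, mul_one]
          exact hs2
        · calc Metric.infDist (s • ζ) (sphere (0:ℂ) 1 ∩ φ ⁻¹' X) ≤ dist (s • ζ) ζ :=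
              infDist_le_dist_of_mem hζX
            _ = 1 - s := by
              rw [dist_eq_norm]
              have : s • ζ - ζ = (s - 1) • ζ := by
                rw [sub_smul, one_smul]
              rw [this, norm_smul, Real.norm_eq_abs, hζn, mul_one, _root_.abs_of_nonpos (by linarith)]
              ring
            _ < δ := by linarith
      -- Hölder bound along the ray
      have hβnn : ((β.toNNReal : ℝ≥0) : ℝ) = β := Real.coe_toNNReal β hβ0.le
      have hHold : ∀ s : ℝ, T ≤ s → s < 1 →
          dist (φ (s • ζ)) (φ p) ≤ CC * (1 - T) ^ (β : ℝ) := by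
        intro s hs1 hs2
        have h1 := holder_dist_le hHolderC (hWmem s hs1 hs2) (hWmem T le_rfl hT1)
        rw [hβnn] at h1
        have h2 : dist (s • ζ) ((T : ℝ) • ζ) = s - T := by
          rw [dist_eq_norm]
          have : s • ζ - T • ζ = (s - T) • ζ := by rw [sub_smul]
          rw [this, norm_smul, Real.norm_eq_abs, hζn, mul_one, _root_.abs_of_nonneg (by linarith)]
        have hp' : p = (T : ℝ) • ζ := by rw [hpdef, hTdef]
        rw [← hp'] at h1 h2
        rw [h2] at h1
        calc dist (φ (s • ζ)) (φ p) ≤ (C : ℝ) * (s - T) ^ (β : ℝ) := h1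
          _ ≤ CC * (1 - T) ^ (β : ℝ) := by
            apply mul_le_mul hCCC
            · exact Real.rpow_le_rpow (by linarith) (by linarith) hβ0.le
            · exact Real.rpow_nonneg (by linarith) _
            · linarith
      -- limit s → 1
      have hlim : dist w (φ p) ≤ CC * (1 - T) ^ (β : ℝ) := by
        have h1 : Tendsto (fun s : ℝ => (s • ζ : ℂ)) (𝓝[<] (1:ℝ))
            (𝓝[closedBall (0:ℂ) 1] ζ) := by
          rw [tendsto_nhdsWithin_iff]
          constructor
          · have hcont : Continuous (fun s : ℝ => (s • ζ : ℂ)) :=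
              continuous_id.smul continuous_const
            have := (hcont.tendsto 1).mono_left (nhdsWithin_le_nhds (s := Iio (1:ℝ)))
            simpa using this
          · filter_upwards [Ioo_mem_nhdsLT_of_mem
              (show (1:ℝ) ∈ Ioc (0:ℝ) 1 by constructor <;> norm_num)] with s hs
            rw [mem_closedBall, dist_zero_right, norm_smul, Real.norm_eq_abs,
              _root_.abs_of_nonneg hs.1.le, hζn, mul_one]
            exact hs.2.le
        have h2 : ContinuousWithinAt φ (closedBall (0:ℂ) 1) ζ :=
          hφcont ζ (sphere_subset_closedBall hζs)
        have h3 : Tendsto (fun s : ℝ => φ (s • ζ)) (𝓝[<] (1:ℝ)) (𝓝 w) := by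
          have := h2.tendsto.comp h1
          rwa [hφζ] at this
        have h4 : Tendsto (fun s : ℝ => dist (φ (s • ζ)) (φ p)) (𝓝[<] (1:ℝ))
            (𝓝 (dist w (φ p))) := h3.dist tendsto_const_nhds
        refine le_of_tendsto h4 ?_
        filter_upwards [Ioo_mem_nhdsLT_of_mem
          (show (1:ℝ) ∈ Ioc T 1 from ⟨hT1, le_refl 1⟩)] with s hs
        exact hHold s hs.1.le hs.2
      -- from the Hölder bound to the lower bound on 1 - T
      have hwc : w ∈ Dᶜ := by
        have h1 : w ∈ frontier D := hXsub hw
        rw [hDopen.frontier_eq] at h1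
        exact h1.2
      have hlow : L / 4 ≤ infDist (φ p) Dᶜ := by
        have h1 : infDist Q.1 Dᶜ ≤ infDist (φ p) Dᶜ + dist Q.1 (φ p) :=
          infDist_le_infDist_add_dist
        rw [dist_comm] at h1
        have h2 : dist (φ p) Q.1 ≤ 3/4 * L := hsq
        rw [← hddef] at h1
        linarith
      have hup : infDist (φ p) Dᶜ ≤ CC * (1 - T) ^ (β : ℝ) := by
        calc infDist (φ p) Dᶜ ≤ dist (φ p) w := infDist_le_dist_of_mem hwc
          _ = dist w (φ p) := dist_comm _ _
          _ ≤ CC * (1 - T) ^ (β : ℝ) := hlim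
      have hkey : L / (4 * CC) ≤ (1 - T) ^ (β : ℝ) := by
        rw [div_le_iff₀ (by positivity)]
        calc L = 4 * (L / 4) := by ring
          _ ≤ 4 * (CC * (1 - T) ^ (β : ℝ)) := by
            apply mul_le_mul_of_nonneg_left (le_trans hlow hup) (by norm_num)
          _ = (1 - T) ^ (β : ℝ) * (4 * CC) := by ring
      have h5 : (L / (4 * CC)) ^ (1/β : ℝ) ≤ ((1 - T) ^ (β : ℝ)) ^ (1/β : ℝ) :=
        Real.rpow_le_rpow (by positivity) hkey (by positivity)
      have h6 : ((1 - T) ^ (β : ℝ)) ^ (1/β : ℝ) = 1 - T := by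
        rw [← Real.rpow_mul (by linarith), mul_one_div, div_self hβ0.ne', Real.rpow_one]
      rw [h6] at h5
      exact h5
  -- combine: lower bound on 1 - ‖v‖
  have hvlow : ρ / 32 ≤ 1 - ‖v‖ := by
    have h1 : ρ ≤ 1 - ‖p‖ := by rw [hpn]; exact hTρ
    have h2 : ρ / 32 ≤ (1 - ‖p‖) / 32 := by linarith
    exact h2.trans hvp
  -- final computation
  have hdist := hypDistDisk_le_log hu hv
  have hlogu : -Real.log (1 - ‖u‖) = A₀ := by rw [hA₀def, hueq]
  have hρ32 : 0 < ρ / 32 := by linarith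
  have hlogv : -Real.log (1 - ‖v‖) ≤ Real.log 32 + (-Real.log ρ) := by
    have h1 : Real.log (ρ / 32) ≤ Real.log (1 - ‖v‖) :=
      Real.log_le_log hρ32 hvlow
    have h2 : Real.log (ρ / 32) = Real.log ρ - Real.log 32 :=
      Real.log_div hρ0.ne' (by norm_num)
    linarith
  have hlogρ : -Real.log ρ ≤ -Real.log δ + (1/β) * Real.log ((4 * CC) / L) := by
    have hx1 : (1:ℝ) ≤ (4 * CC) / L := by
      rw [le_div_iff₀ hL]
      calc 1 * L = L := one_mul L
        _ ≤ Lmax := hLLmax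
        _ ≤ CC := hCCLmax
        _ ≤ 4 * CC := by linarith
    have hlogx0 : 0 ≤ Real.log ((4 * CC) / L) := Real.log_nonneg hx1
    rcases min_cases δ ((L / (4 * CC)) ^ (1/β : ℝ)) with ⟨heq, -⟩ | ⟨heq, hle⟩
    · rw [hρdef, heq]
      have : 0 ≤ (1/β) * Real.log ((4 * CC) / L) := by positivity
      linarith
    · rw [hρdef, heq]
      have h1 : Real.log ((L / (4 * CC)) ^ (1/β : ℝ)) = (1/β) * Real.log (L / (4 * CC)) :=
        Real.log_rpow (by positivity) _
      have h2 : Real.log (L / (4 * CC)) = -Real.log ((4 * CC) / L) := by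
        rw [Real.log_div hL.ne' (by positivity), Real.log_div (by positivity) hL.ne']
        ring
      rw [h1, h2]
      have : 0 ≤ -Real.log δ := hlogδ
      have hfin : -((1/β) * -Real.log ((4 * CC) / L)) = (1/β) * Real.log ((4 * CC) / L) := by
        ring
      rw [hfin]
      linarith
  -- putting it together
  set x : ℝ := (4 * CC) / L with hxdef
  have hx0 : 0 < x := by positivity
  have hx1 : (1:ℝ) ≤ x := by
    rw [hxdef, le_div_iff₀ hL]
    calc 1 * L = L := one_mul L
      _ ≤ Lmax := hLLmax
      _ ≤ CC := hCCLmax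
      _ ≤ 4 * CC := by linarith
  have hxa1 : (1:ℝ) ≤ x ^ a := by
    calc (1:ℝ) = 1 ^ a := (Real.one_rpow a).symm
      _ ≤ x ^ a := Real.rpow_le_rpow zero_le_one hx1 ha0.le
  have hxa0 : (0:ℝ) < x ^ a := by linarith
  have hlogx : Real.log x ≤ x ^ a / a := by
    have h1 : Real.log (x ^ a) = a * Real.log x := Real.log_rpow hx0 a
    have h2 : Real.log (x ^ a) ≤ x ^ a := by
      have := Real.log_le_sub_one_of_pos (show 0 < x ^ a from hxa0)
      linarith
    rw [h1, mul_comm] at h2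
    rw [le_div_iff₀ ha0]
    exact h2
  rw [hlogu] at hdist
  have htotal : hypDistDisk u v ≤ A + B * Real.log x := by
    have h1 : (1/β) * Real.log ((4 * CC) / L) = B * Real.log x := by
      rw [hBdef, hxdef]
    rw [h1] at hlogρ
    have hAexp : A = A₀ + Real.log 32 + (-Real.log δ) + 1 := hAdef
    linarith [hdist, hlogv, hlogρ]
  have hxa : x ^ a = (4*CC) ^ a * L ^ (-a) := by
    rw [hxdef, Real.div_rpow (by positivity) hL.le, Real.rpow_neg hL.le, div_eq_mul_inv]
  calc hypDistDisk u v ≤ A + B * Real.log x := htotal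
    _ ≤ (A + B / a + 1) * x ^ a := by
        have h1 : A ≤ A * x ^ a := le_mul_of_one_le_right hA.le hxa1
        have h2 : B * Real.log x ≤ B * (x ^ a / a) := mul_le_mul_of_nonneg_left hlogx hB.le
        have h4 : (0:ℝ) ≤ x ^ a := by linarith
        have h5 : A + B * Real.log x ≤ A * x ^ a + B * (x ^ a / a) := add_le_add h1 h2
        have h6 : A * x ^ a + B * (x ^ a / a) = (A + B / a) * x ^ a := by ring
        have h7 : (A + B / a) * x ^ a ≤ (A + B / a + 1) * x ^ a :=
          mul_le_mul_of_nonneg_right (le_add_of_nonneg_right zero_le_one) h4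
        calc A + B * Real.log x ≤ A * x ^ a + B * (x ^ a / a) := h5
          _ = (A + B / a) * x ^ a := h6
          _ ≤ (A + B / a + 1) * x ^ a := h7
    _ = M * L ^ (-a) := by rw [hMdef, hxa]; ring
end

section
/- Fix n ∈ ℕ, r₀ > 0, and a compact set K ⊆ ℍ (the upper half-plane). There exists a constant C = C(n, K, r₀) such that for any distinct points z₁, …, zₙ ∈ K, one can choose for each 1 ≤ j ≤ n an integer n_j ∈ ℕ and radii s_{j,k}, r_{j,k} ∈ (0, r₀) (all r_{j,k} negative powers of 2) with 0 < s_{j,k} < r_{j,k} for 1 ≤ k ≤ n_j − 1 and s_{j,n_j} = 0 < r_{j,n_j}, such that the annuli B(z_j, r_{j,k}) \ B(z_j, s_{j,k}) are pairwise disjoint (over all j, k) and ∏_{j=1}^n (∏_{k=1}^{n_j−1} s_{j,k}) / (∏_{k=1}^{n_j} r_{j,k}) ≤ C ∏_{j=1}^n 1/min_{i<j} |z_j − z_i|, with the conventions that an empty product equals 1 and z₀ = 0. Moreover one may take n_j ≤ n for all j. -/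
open Complex Metric Set Finset



/-- negative powers of two -/
def P2 (x : ℝ) : Prop := ∃ p : ℕ, x = (2:ℝ)⁻¹ ^ p

/-- the largest power `(1/2)^p ≤ x` (equals 1 if `x ≥ 1`). -/
noncomputable def pw (x : ℝ) : ℝ := (2:ℝ)⁻¹ ^ Nat.clog 2 ⌈x⁻¹⌉₊

lemma pw_P2 (x : ℝ) : P2 (pw x) := ⟨_, rfl⟩

lemma pw_pos (x : ℝ) : 0 < pw x := pow_pos (by norm_num) _

lemma pw_eq_inv (x : ℝ) : pw x = ((2:ℝ) ^ Nat.clog 2 ⌈x⁻¹⌉₊)⁻¹ := by rw [pw, inv_pow]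

lemma pw_le {x : ℝ} (hx : 0 < x) : pw x ≤ x := by
  have h1 : (⌈x⁻¹⌉₊ : ℝ) ≤ (2:ℝ) ^ Nat.clog 2 ⌈x⁻¹⌉₊ := by
    exact_mod_cast Nat.le_pow_clog one_lt_two _
  have h2 : x⁻¹ ≤ (2:ℝ) ^ Nat.clog 2 ⌈x⁻¹⌉₊ := (Nat.le_ceil _).trans h1
  rw [pw_eq_inv]
  rw [inv_le_comm₀ (by positivity) hx]
  exact h2

lemma le_pw {x : ℝ} (hx : 0 < x) : min x 1 / 4 ≤ pw x := by
  rcases le_or_gt 1 x with h | h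
  · have h0 : ⌈x⁻¹⌉₊ ≤ 1 := by
      have : x⁻¹ ≤ 1 := inv_le_one_of_one_le₀ h
      exact Nat.ceil_le.2 (by exact_mod_cast this)
    have h1 : Nat.clog 2 ⌈x⁻¹⌉₊ = 0 := by
      rcases Nat.le_one_iff_eq_zero_or_eq_one.mp h0 with h' | h' <;> rw [h'] <;> simp
    rw [pw, h1, pow_zero]
    have := min_le_right x 1
    linarith
  · have hx1 : (1:ℝ) ≤ x⁻¹ := one_le_inv_iff₀.2 ⟨hx, h.le⟩
    have hm1 : 1 ≤ ⌈x⁻¹⌉₊ := Nat.one_le_ceil_iff.2 (by positivity)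
    have hmin : min x 1 = x := min_eq_left h.le
    rcases eq_or_lt_of_le hm1 with he | hm2
    · have h1 : Nat.clog 2 ⌈x⁻¹⌉₊ = 0 := by rw [← he]; simp
      rw [pw, h1, pow_zero, hmin]
      linarith
    · have h4 : (2:ℕ) ^ (Nat.clog 2 ⌈x⁻¹⌉₊).pred < ⌈x⁻¹⌉₊ :=
        Nat.pow_pred_clog_lt_self one_lt_two hm2
      have hp : 1 ≤ Nat.clog 2 ⌈x⁻¹⌉₊ := Nat.clog_pos one_lt_two hm2
      have h5 : (2:ℝ) ^ Nat.clog 2 ⌈x⁻¹⌉₊ < 2 * ⌈x⁻¹⌉₊ := by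
        have he2 : (2:ℕ) ^ Nat.clog 2 ⌈x⁻¹⌉₊ = 2 * 2 ^ (Nat.clog 2 ⌈x⁻¹⌉₊).pred := by
          conv_lhs => rw [← Nat.succ_pred_eq_of_pos hp]
          rw [pow_succ']
        have h6 : (2:ℕ) ^ Nat.clog 2 ⌈x⁻¹⌉₊ < 2 * ⌈x⁻¹⌉₊ := by
          rw [he2]; omega
        exact_mod_cast h6
      have h7 : (⌈x⁻¹⌉₊ : ℝ) < x⁻¹ + 1 := Nat.ceil_lt_add_one (by positivity)
      have h8 : (2:ℝ) ^ Nat.clog 2 ⌈x⁻¹⌉₊ < 4 * x⁻¹ := by nlinarith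
      have h9 : (2:ℝ) ^ Nat.clog 2 ⌈x⁻¹⌉₊ * x < 4 := by
        have hxx : x⁻¹ * x = 1 := inv_mul_cancel₀ hx.ne'
        nlinarith
      have hpow : (0:ℝ) < (2:ℝ) ^ Nat.clog 2 ⌈x⁻¹⌉₊ := by positivity
      rw [pw_eq_inv, hmin]
      rw [div_le_iff₀ (by norm_num : (0:ℝ) < 4)]
      have h10 : x ≤ 4 / (2:ℝ) ^ Nat.clog 2 ⌈x⁻¹⌉₊ := by
        rw [le_div_iff₀ hpow]
        nlinarith
      calc x ≤ 4 / (2:ℝ) ^ Nat.clog 2 ⌈x⁻¹⌉₊ := h10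
        _ = ((2:ℝ) ^ Nat.clog 2 ⌈x⁻¹⌉₊)⁻¹ * 4 := by rw [div_eq_mul_inv]; ring

lemma min_P2 {x y : ℝ} (hx : P2 x) (hy : P2 y) : P2 (min x y) := by
  rcases le_total x y with h | h
  · rwa [min_eq_left h]
  · rwa [min_eq_right h]

/-! ### Annuli chains -/

/-- the (half-open) annulus around `w` with inner radius `p.1`, outer radius `p.2`. -/
def Ann (w : ℂ) (p : ℝ × ℝ) : Set ℂ := Metric.ball w p.2 \ Metric.ball w p.1

/-- ratio contributed by one annulus -/
noncomputable def annR (p : ℝ × ℝ) : ℝ := p.1 / p.2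

/-- `b` lies strictly inside the hole of `a` -/
def Rin (a b : ℝ × ℝ) : Prop := b.2 ≤ a.1

/-- a chain: list of annuli (outermost first, inner radius > 0) together with
an innermost ball radius -/
noncomputable def Reg (w : ℂ) (c : List (ℝ × ℝ) × ℝ) : Set ℂ :=
  (⋃ p ∈ c.1, Ann w p) ∪ Metric.ball w c.2

noncomputable def chR (c : List (ℝ × ℝ) × ℝ) : ℝ := (c.1.map annR).prod / c.2

structure AInv (r₀ : ℝ) (c : List (ℝ × ℝ) × ℝ) : Prop where
  mem : ∀ p ∈ c.1, 0 < p.1 ∧ p.1 < p.2 ∧ p.2 < r₀ ∧ P2 p.2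
  pair : c.1.Pairwise Rin
  ball_le : ∀ p ∈ c.1, c.2 ≤ p.1
  bpos : 0 < c.2
  blt : c.2 < r₀
  bP2 : P2 c.2

lemma Ann_disjoint (w : ℂ) {a b : ℝ × ℝ} (h : Rin a b) : Disjoint (Ann w a) (Ann w b) := by
  rw [Set.disjoint_left]
  rintro x ⟨-, hx2⟩ ⟨hx3, -⟩
  exact hx2 (Metric.ball_subset_ball h hx3)

lemma Ann_mono (w : ℂ) {a b : ℝ × ℝ} (h1 : a.1 ≤ b.1) (h2 : b.2 ≤ a.2) :
    Ann w b ⊆ Ann w a := fun x ⟨hx1, hx2⟩ =>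
  ⟨Metric.ball_subset_ball h2 hx1, fun hx => hx2 (Metric.ball_subset_ball h1 hx)⟩

/-! ### surgery -/

/-- trim an annulus: keep the parts outside the radial band `[tl, th)`. -/
noncomputable def trim (tl th : ℝ) (p : ℝ × ℝ) : List (ℝ × ℝ) :=
  (if max p.1 th < p.2 then [(max p.1 th, p.2)] else []) ++
  (if p.1 < min p.2 tl then [(p.1, min p.2 tl)] else [])

/-- surgery on a chain: trim all annuli, shrink the ball, possibly add one annulus
  above the ball. -/
noncomputable def surg (tl th : ℝ) (c : List (ℝ × ℝ) × ℝ) : List (ℝ × ℝ) × ℝ :=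
  (c.1.flatMap (trim tl th) ++ (if th < c.2 then [(th, c.2)] else []), min c.2 tl)

lemma mem_trim {tl th : ℝ} {p q : ℝ × ℝ} (hq : q ∈ trim tl th p) :
    (q = (max p.1 th, p.2) ∧ max p.1 th < p.2) ∨
      (q = (p.1, min p.2 tl) ∧ p.1 < min p.2 tl) := by
  rcases List.mem_append.1 hq with h | h
  · left
    by_cases hc : max p.1 th < p.2
    · simp [hc] at h; exact ⟨h, hc⟩
    · simp [hc] at h
  · right
    by_cases hc : p.1 < min p.2 tl
    · simp [hc] at h; exact ⟨h, hc⟩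
    · simp [hc] at h

lemma trim_sub {tl th : ℝ} {p q : ℝ × ℝ} (hq : q ∈ trim tl th p) :
    p.1 ≤ q.1 ∧ q.2 ≤ p.2 ∧ q.1 < q.2 := by
  rcases mem_trim hq with ⟨rfl, hc⟩ | ⟨rfl, hc⟩
  · exact ⟨le_max_left _ _, le_rfl, hc⟩
  · exact ⟨le_rfl, min_le_left _ _, hc⟩

lemma pairwise_flatMap {α β : Type*} {S : β → β → Prop} {T : α → α → Prop}
    {f : α → List β} {l : List α} (hl : l.Pairwise T)
    (h1 : ∀ a ∈ l, (f a).Pairwise S)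
    (h2 : ∀ a b, T a b → ∀ x ∈ f a, ∀ y ∈ f b, S x y) :
    (l.flatMap f).Pairwise S := by
  induction l with
  | nil => simp
  | cons a l ih =>
    rw [List.flatMap_cons, List.pairwise_append]
    rw [List.pairwise_cons] at hl
    refine ⟨h1 a (by simp), ih hl.2 (fun b hb => h1 b (by simp [hb])) , ?_⟩
    intro x hx y hy
    obtain ⟨b, hb, hyb⟩ := List.mem_flatMap.1 hy
    exact h2 a b (hl.1 b hb) x hx y hyb

lemma prod_map_flatMap {α β : Type*} (g : β → ℝ) (f : α → List β) (l : List α) :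
    ((l.flatMap f).map g).prod = (l.map (fun a => ((f a).map g).prod)).prod := by
  induction l with
  | nil => simp
  | cons a l ih => simp [List.flatMap_cons, ih]

lemma list_prod_le {α : Type*} {l : List α} {F G : α → ℝ}
    (h0 : ∀ a ∈ l, 0 ≤ F a) (hle : ∀ a ∈ l, F a ≤ G a) :
    (l.map F).prod ≤ (l.map G).prod := by
  induction l with
  | nil => simp
  | cons a l ih =>
    simp only [List.map_cons, List.prod_cons]
    have hF : 0 ≤ (l.map F).prod :=
      List.prod_nonneg (by rintro x hx; obtain ⟨b, hb, rfl⟩ := List.mem_map.1 hx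
                           exact h0 b (by simp [hb]))
    exact mul_le_mul (hle a (by simp)) (ih (fun b hb => h0 b (by simp [hb]))
      (fun b hb => hle b (by simp [hb]))) hF
      (le_trans (h0 a (by simp)) (hle a (by simp)))

lemma trim_prod {tl th : ℝ} {p : ℝ × ℝ} (htl : 0 < tl) (hth : tl ≤ th)
    (hp1 : 0 < p.1) (hp2 : p.1 < p.2) :
    ((trim tl th p).map annR).prod ≤ (th / tl) * annR p := by
  obtain ⟨s, r⟩ := p
  simp only at hp1 hp2
  have hr : 0 < r := hp1.trans hp2
  have hthp : 0 < th := htl.trans_le hth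
  rw [trim]
  by_cases hU : max s th < r <;> by_cases hL : s < min r tl <;>
    simp only [hU, hL, if_true, if_false, List.map_append, List.prod_append,
      List.map_cons, List.map_nil, List.prod_cons, List.prod_nil, annR, if_pos, if_neg,
      not_true, not_false_iff, List.append_nil, List.nil_append, mul_one, one_mul]
  · -- both pieces
    have hstl : s < tl := lt_of_lt_of_le hL (min_le_right _ _)
    have hmax : max s th = th := max_eq_right (hstl.le.trans hth)
    have hthr : th < r := by rw [hmax] at hU; exact hU
    have hmin : min r tl = tl := min_eq_right (hth.trans hthr.le)
    rw [hmax, hmin]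
    have heq : th / r * (s / tl) = th / tl * (s / r) := by
      field_simp
    exact le_of_eq heq
  · -- only upper
    have htls : tl ≤ s := by
      have h1 := not_lt.1 hL
      rcases le_total r tl with h | h
      · rw [min_eq_left h] at h1; linarith
      · rwa [min_eq_right h] at h1
    rw [div_mul_div_comm, div_le_div_iff₀ (by positivity) (by positivity)]
    rcases max_cases s th with ⟨hm, hm'⟩ | ⟨hm, hm'⟩ <;> rw [hm]
    · nlinarith [mul_nonneg (mul_nonneg (sub_nonneg.2 hth) hp1.le) hr.le]
    · nlinarith [mul_nonneg (mul_nonneg (sub_nonneg.2 htls) hthp.le) hr.le]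
  · -- only lower
    have hrth : r ≤ th := by
      have h1 := not_lt.1 hU
      rcases max_cases s th with ⟨hm, _⟩ | ⟨hm, _⟩ <;> rw [hm] at h1
      · linarith
      · linarith
    rw [div_mul_div_comm, div_le_div_iff₀ (by positivity) (by positivity)]
    rcases min_cases r tl with ⟨hm, hm'⟩ | ⟨hm, hm'⟩ <;> rw [hm]
    · nlinarith [mul_nonneg (mul_nonneg (sub_nonneg.2 hth) hp1.le) hr.le]
    · nlinarith [mul_nonneg (mul_nonneg (sub_nonneg.2 hrth) hp1.le) htl.le]
  · -- nothing
    have htls : tl ≤ s := by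
      have h1 := not_lt.1 hL
      rcases le_total r tl with h | h
      · rw [min_eq_left h] at h1; linarith
      · rwa [min_eq_right h] at h1
    have hrth : r ≤ th := by
      have h1 := not_lt.1 hU
      rcases max_cases s th with ⟨hm, _⟩ | ⟨hm, _⟩ <;> rw [hm] at h1
      · linarith
      · linarith
    rw [div_mul_div_comm, le_div_iff₀ (by positivity), one_mul]
    calc tl * r ≤ s * th := mul_le_mul htls hrth hr.le hp1.le
      _ = th * s := mul_comm _ _

lemma trim_pairwise {tl th : ℝ} (hth : tl ≤ th) (p : ℝ × ℝ) :
    (trim tl th p).Pairwise Rin := by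
  rw [trim]
  by_cases hU : max p.1 th < p.2 <;> by_cases hL : p.1 < min p.2 tl <;>
    simp [hU, hL, Rin]
  exact Or.inr (Or.inr hth)

lemma surg_AInv {r₀ tl th : ℝ} {c : List (ℝ × ℝ) × ℝ} (hI : AInv r₀ c)
    (htl : 0 < tl) (hth : tl ≤ th) (hP : P2 tl) : AInv r₀ (surg tl th c) := by
  have hextra : ∀ q ∈ (if th < c.2 then [(th, c.2)] else []), q = (th, c.2) ∧ th < c.2 := by
    intro q hq
    by_cases hc : th < c.2
    · simp [hc] at hq; exact ⟨hq, hc⟩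
    · simp [hc] at hq
  constructor
  · rintro q hq
    rcases List.mem_append.1 hq with h | h
    · obtain ⟨p, hp, hqp⟩ := List.mem_flatMap.1 h
      obtain ⟨h1, h2, h3, h4⟩ := hI.mem p hp
      rcases mem_trim hqp with ⟨rfl, hc⟩ | ⟨rfl, hc⟩
      · exact ⟨lt_of_lt_of_le (htl.trans_le hth) (le_max_right _ _), hc, h3, h4⟩
      · exact ⟨h1, hc, lt_of_le_of_lt (min_le_left _ _) h3, min_P2 h4 hP⟩
    · obtain ⟨rfl, hc⟩ := hextra q h
      exact ⟨htl.trans_le hth, hc, hI.blt, hI.bP2⟩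
  · simp only [surg]
    rw [List.pairwise_append]
    refine ⟨pairwise_flatMap hI.pair (fun p _ => trim_pairwise hth p) ?_, ?_, ?_⟩
    · intro a b hab x hx y hy
      have hx' := trim_sub hx
      have hy' := trim_sub hy
      exact le_trans (le_trans hy'.2.1 hab) hx'.1
    · by_cases hc : th < c.2 <;> simp [hc]
    · intro x hx y hy
      obtain ⟨rfl, _⟩ := hextra y hy
      obtain ⟨p, hp, hxp⟩ := List.mem_flatMap.1 hx
      exact le_trans (hI.ball_le p hp) (trim_sub hxp).1
  · intro q hq
    rcases List.mem_append.1 hq with h | h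
    · obtain ⟨p, hp, hqp⟩ := List.mem_flatMap.1 h
      calc min c.2 tl ≤ c.2 := min_le_left _ _
        _ ≤ p.1 := hI.ball_le p hp
        _ ≤ q.1 := (trim_sub hqp).1
    · obtain ⟨rfl, _⟩ := hextra q h
      calc min c.2 tl ≤ tl := min_le_right _ _
        _ ≤ th := hth
  · exact lt_min hI.bpos htl
  · exact lt_of_le_of_lt (min_le_left _ _) hI.blt
  · exact min_P2 hI.bP2 hP

lemma flatMap_len_le {α β : Type*} {f : α → List β} {l : List α}
    (h : ∀ a ∈ l, (f a).length ≤ 1) : (l.flatMap f).length ≤ l.length := by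
  induction l with
  | nil => simp
  | cons a l ih =>
    rw [List.flatMap_cons, List.length_append, List.length_cons]
    have := h a (by simp)
    have := ih (fun b hb => h b (by simp [hb]))
    omega

lemma trim_len_le_two {tl th : ℝ} (p : ℝ × ℝ) : (trim tl th p).length ≤ 2 := by
  rw [trim, List.length_append]
  split <;> split <;> simp

lemma trim_len_le_one {tl th : ℝ} {p : ℝ × ℝ} (h : ¬(p.1 < tl ∧ th < p.2)) :
    (trim tl th p).length ≤ 1 := by
  rw [trim, List.length_append]
  by_cases hU : max p.1 th < p.2 <;> by_cases hL : p.1 < min p.2 tl <;> simp [hU, hL]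
  exact absurd ⟨lt_of_lt_of_le hL (min_le_right _ _),
    lt_of_le_of_lt (le_max_right _ _) hU⟩ h

lemma flatMap_trim_len {tl th : ℝ} (hth : tl ≤ th) {l : List (ℝ × ℝ)} :
    l.Pairwise Rin → (l.flatMap (trim tl th)).length ≤ l.length + 1 := by
  induction l with
  | nil => simp
  | cons p l ih =>
    intro hpair
    rw [List.pairwise_cons] at hpair
    rw [List.flatMap_cons, List.length_append]
    by_cases hs : p.1 < tl ∧ th < p.2
    · have h2 : (l.flatMap (trim tl th)).length ≤ l.length := by
        apply flatMap_len_le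
        intro q hq
        apply trim_len_le_one
        rintro ⟨-, h3⟩
        have h4 : q.2 ≤ p.1 := hpair.1 q hq
        linarith [hs.1, hth]
      have := trim_len_le_two (tl := tl) (th := th) p
      simp only [List.length_cons]
      omega
    · have := trim_len_le_one hs
      have := ih hpair.2
      simp only [List.length_cons]
      omega

lemma surg_len {r₀ tl th : ℝ} {c : List (ℝ × ℝ) × ℝ} (hI : AInv r₀ c) (hth : tl ≤ th) :
    (surg tl th c).1.length ≤ c.1.length + 1 := by
  rw [surg]
  simp only [List.length_append]
  by_cases hc : th < c.2
  · -- ball splits; no annulus can split since their inner radii exceed th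
    have h1 : (c.1.flatMap (trim tl th)).length ≤ c.1.length := by
      apply flatMap_len_le
      intro p hp
      apply trim_len_le_one
      rintro ⟨h2, -⟩
      have := hI.ball_le p hp
      linarith
    rw [if_pos hc]
    simp only [List.length_singleton]
    omega
  · have h1 := flatMap_trim_len hth hI.pair
    rw [if_neg hc]
    simp only [List.length_nil]
    omega

lemma mem_Ann {w x : ℂ} {p : ℝ × ℝ} : x ∈ Ann w p ↔ p.1 ≤ dist x w ∧ dist x w < p.2 := by
  simp [Ann, Metric.mem_ball, and_comm, not_lt]

lemma surg_reg_sub {w : ℂ} {tl th : ℝ} {c : List (ℝ × ℝ) × ℝ} :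
    Reg w (surg tl th c) ⊆ Reg w c := by
  intro x hx
  rcases hx with hx | hx
  · simp only [mem_iUnion, exists_prop] at hx
    obtain ⟨q, hq, hxq⟩ := hx
    rcases List.mem_append.1 hq with h | h
    · obtain ⟨p, hp, hqp⟩ := List.mem_flatMap.1 h
      obtain ⟨h1, h2, -⟩ := trim_sub hqp
      exact Or.inl (mem_iUnion.2 ⟨p, mem_iUnion.2 ⟨hp, Ann_mono w h1 h2 hxq⟩⟩)
    · by_cases hc : th < c.2
      · rw [if_pos hc] at h
        simp only [List.mem_singleton] at h
        subst h
        exact Or.inr hxq.1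
      · rw [if_neg hc] at h
        simp at h
  · exact Or.inr (Metric.ball_subset_ball (min_le_left _ _) hx)

lemma surg_avoid {w x : ℂ} {tl th : ℝ} {c : List (ℝ × ℝ) × ℝ}
    (hx : x ∈ Reg w (surg tl th c)) : dist x w < tl ∨ th ≤ dist x w := by
  rcases hx with hx | hx
  · simp only [mem_iUnion, exists_prop] at hx
    obtain ⟨q, hq, hxq⟩ := hx
    rw [mem_Ann] at hxq
    rcases List.mem_append.1 hq with h | h
    · obtain ⟨p, hp, hqp⟩ := List.mem_flatMap.1 h
      rcases mem_trim hqp with ⟨rfl, -⟩ | ⟨rfl, -⟩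
      · exact Or.inr (le_trans (le_trans (le_max_right _ _) (le_refl _)) hxq.1)
      · exact Or.inl (lt_of_lt_of_le hxq.2 (min_le_right _ _))
    · by_cases hc : th < c.2
      · rw [if_pos hc] at h
        simp only [List.mem_singleton] at h
        subst h
        exact Or.inr hxq.1
      · rw [if_neg hc] at h
        simp at h
  · exact Or.inl (lt_of_lt_of_le (Metric.mem_ball.1 hx) (min_le_right _ _))

lemma prod_map_const_mul {α : Type*} (k : ℝ) (g : α → ℝ) (l : List α) :
    (l.map (fun a => k * g a)).prod = k ^ l.length * (l.map g).prod := by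
  induction l with
  | nil => simp
  | cons a l ih => simp [ih, pow_succ]; ring

lemma surg_chR {r₀ tl th : ℝ} {c : List (ℝ × ℝ) × ℝ} (hI : AInv r₀ c)
    (htl : 0 < tl) (hth : tl ≤ th) :
    chR (surg tl th c) ≤ (th / tl) ^ (c.1.length + 1) * chR c := by
  have hq : (1:ℝ) ≤ th / tl := (one_le_div htl).2 hth
  have hP0 : 0 ≤ (c.1.map annR).prod := by
    apply List.prod_nonneg
    intro a ha
    obtain ⟨p, hp, rfl⟩ := List.mem_map.1 ha
    obtain ⟨h1, h2, -⟩ := hI.mem p hp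
    exact div_nonneg h1.le (h1.trans h2).le
  have step1 : ((c.1.flatMap (trim tl th)).map annR).prod ≤
      (th / tl) ^ c.1.length * (c.1.map annR).prod := by
    rw [prod_map_flatMap]
    calc (c.1.map (fun p => ((trim tl th p).map annR).prod)).prod
        ≤ (c.1.map (fun p => (th / tl) * annR p)).prod := by
          apply list_prod_le
          · intro p hp
            apply List.prod_nonneg
            intro a ha
            obtain ⟨q, hq', rfl⟩ := List.mem_map.1 ha
            obtain ⟨h1, -, h3⟩ := trim_sub hq'
            obtain ⟨h4, -, -⟩ := hI.mem p hp
            exact div_nonneg (le_trans h4.le h1) (lt_of_le_of_lt (le_trans h4.le h1) h3).le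
          · intro p hp
            obtain ⟨h1, h2, -⟩ := hI.mem p hp
            exact trim_prod htl hth h1 h2
      _ = (th / tl) ^ c.1.length * (c.1.map annR).prod := prod_map_const_mul _ _ _
  have step2 : ((if th < c.2 then [(th, c.2)] else []).map annR).prod / min c.2 tl ≤
      (th / tl) * (1 / c.2) := by
    have hc2pos := hI.bpos
    by_cases hc : th < c.2
    · rw [if_pos hc]
      have hmin : min c.2 tl = tl := min_eq_right (hth.trans hc.le)
      rw [hmin]
      simp only [List.map_cons, List.map_nil, List.prod_cons, List.prod_nil, mul_one, annR]
      apply le_of_eq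
      rw [div_div, div_mul_div_comm, mul_one, mul_comm c.2 tl]
    · rw [if_neg hc]
      simp only [List.map_nil, List.prod_nil]
      have hc2 : c.2 ≤ th := not_lt.1 hc
      rw [div_mul_div_comm, mul_one]
      rcases min_cases c.2 tl with ⟨hm, hm'⟩ | ⟨hm, hm'⟩ <;> rw [hm] <;>
        rw [div_le_div_iff₀ (by positivity) (by positivity)] <;> nlinarith
  -- combine
  have hchR : chR (surg tl th c) =
      ((c.1.flatMap (trim tl th)).map annR).prod *
        (((if th < c.2 then [(th, c.2)] else []).map annR).prod / min c.2 tl) := by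
    rw [chR, surg]
    simp only [List.map_append, List.prod_append]
    ring
  rw [hchR, chR]
  have hflat0 : 0 ≤ ((c.1.flatMap (trim tl th)).map annR).prod := by
    apply List.prod_nonneg
    intro a ha
    obtain ⟨q, hq', rfl⟩ := List.mem_map.1 ha
    obtain ⟨p, hp, hqp⟩ := List.mem_flatMap.1 hq'
    obtain ⟨h1, -, h3⟩ := trim_sub hqp
    obtain ⟨h4, -, -⟩ := hI.mem p hp
    exact div_nonneg (le_trans h4.le h1) (lt_of_le_of_lt (le_trans h4.le h1) h3).le
  calc ((c.1.flatMap (trim tl th)).map annR).prod *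
        (((if th < c.2 then [(th, c.2)] else []).map annR).prod / min c.2 tl)
      ≤ ((th / tl) ^ c.1.length * (c.1.map annR).prod) * ((th / tl) * (1 / c.2)) := by
        apply mul_le_mul step1 step2 ?_ (by positivity)
        apply div_nonneg ?_ (le_of_lt (lt_min hI.bpos htl))
        apply List.prod_nonneg
        intro a ha
        obtain ⟨q, hq', rfl⟩ := List.mem_map.1 ha
        by_cases hc : th < c.2
        · rw [if_pos hc] at hq'
          simp only [List.mem_singleton] at hq'
          subst hq'
          exact div_nonneg (htl.trans_le hth).le hI.bpos.le
        · rw [if_neg hc] at hq'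
          simp at hq'
    _ = (th / tl) ^ (c.1.length + 1) * ((c.1.map annR).prod / c.2) := by
        rw [pow_succ]
        ring

/-! ### the distance to earlier points -/

noncomputable def Dm {n : ℕ} (z : Fin n → ℂ) (j : Fin n) : ℝ :=
  sInf (insert (‖z j‖) {d : ℝ | ∃ i, i < j ∧ d = ‖z j - z i‖})

lemma Dm_finite {n : ℕ} (z : Fin n → ℂ) (j : Fin n) :
    (insert (‖z j‖)
      {d : ℝ | ∃ i, i < j ∧ d = ‖z j - z i‖}).Finite := by
  apply Set.Finite.insert
  have : {d : ℝ | ∃ i, i < j ∧ d = ‖z j - z i‖} =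
      (fun i => ‖z j - z i‖) '' {i : Fin n | i < j} := by
    ext d
    simp only [Set.mem_setOf_eq, Set.mem_image]
    constructor
    · rintro ⟨i, hi, rfl⟩; exact ⟨i, hi, rfl⟩
    · rintro ⟨i, hi, rfl⟩; exact ⟨i, hi, rfl⟩
  rw [this]
  exact Set.Finite.image _ (Set.toFinite _)

lemma Dm_pos {n : ℕ} {z : Fin n → ℂ} (hz : Function.Injective z)
    {K : Set ℂ} (hzK : ∀ j, z j ∈ K) (hKH : K ⊆ {w : ℂ | 0 < w.im}) (j : Fin n) :
    0 < Dm z j := by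
  have hmem := (Set.insert_nonempty _ _).csInf_mem (Dm_finite z j)
  rcases Set.mem_insert_iff.1 hmem with h | h
  · rw [Dm, h]
    have him : 0 < (z j).im := hKH (hzK j)
    have : z j ≠ 0 := fun hc => by rw [hc] at him; simp at him
    exact norm_pos_iff.2 this
  · obtain ⟨i, hij, hd⟩ := h
    rw [Dm, hd]
    have : z j ≠ z i := fun hc => (ne_of_gt hij) (hz hc)
    exact norm_pos_iff.2 (sub_ne_zero.2 this)

lemma Dm_le_abs {n : ℕ} (z : Fin n → ℂ) (j : Fin n) : Dm z j ≤ ‖z j‖ :=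
  csInf_le (Dm_finite z j).bddBelow (Set.mem_insert _ _)

lemma Dm_le_dist {n : ℕ} (z : Fin n → ℂ) {i j : Fin n} (hij : i < j) :
    Dm z j ≤ dist (z i) (z j) := by
  have : ‖z j - z i‖ = dist (z i) (z j) := by
    rw [← dist_eq_norm, dist_comm]
  rw [← this]
  exact csInf_le (Dm_finite z j).bddBelow (Set.mem_insert_of_mem _ ⟨i, hij, rfl⟩)

lemma chR_nonneg {r₀ : ℝ} {c : List (ℝ × ℝ) × ℝ} (hI : AInv r₀ c) : 0 ≤ chR c := by
  apply div_nonneg _ hI.bpos.le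
  apply List.prod_nonneg
  intro a ha
  obtain ⟨p, hp, rfl⟩ := List.mem_map.1 ha
  obtain ⟨h1, h2, -⟩ := hI.mem p hp
  exact div_nonneg h1.le (h1.trans h2).le

lemma Reg_nil (w : ℂ) (ρ : ℝ) : Reg w (([] : List (ℝ × ℝ)), ρ) = Metric.ball w ρ := by
  simp [Reg]

lemma AInv_nil {r₀ ρ : ℝ} (h1 : 0 < ρ) (h2 : ρ < r₀) (h3 : P2 ρ) :
    AInv r₀ (([] : List (ℝ × ℝ)), ρ) :=
  ⟨by simp, by simp, by simp, h1, h2, h3⟩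


/-- arithmetic facts about the trimming radii -/
lemma hold_fact {M ρ dcb : ℝ} (hM : 1 ≤ M) (hρpos : 0 < ρ) (h8ρ : 8 * ρ ≤ dcb)
    (hd2M : dcb ≤ 2 * M) :
    0 < pw (dcb - 2 * ρ) ∧ pw (dcb - 2 * ρ) ≤ dcb - 2 * ρ ∧
      pw (dcb - 2 * ρ) ≤ dcb + 2 * ρ ∧ (dcb + 2 * ρ) / pw (dcb - 2 * ρ) ≤ 7 + 10 * M := by
  have hdpos : 0 < dcb := by linarith
  have hsub : 0 < dcb - 2 * ρ := by linarith
  have htlpos : 0 < pw (dcb - 2 * ρ) := pw_pos _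
  have htlle : pw (dcb - 2 * ρ) ≤ dcb - 2 * ρ := pw_le hsub
  refine ⟨htlpos, htlle, by linarith, ?_⟩
  rw [div_le_iff₀ htlpos]
  have hlow := le_pw hsub
  rcases min_cases (dcb - 2 * ρ) 1 with ⟨hm, hm'⟩ | ⟨hm, hm'⟩ <;> rw [hm] at hlow
  · -- tl ≥ (dcb - 2ρ)/4 ≥ 3 dcb/16
    have h16 : 3 * dcb / 16 ≤ pw (dcb - 2 * ρ) := by linarith
    have hmul : (7 + 10 * M) * (3 * dcb / 16) ≤ (7 + 10 * M) * pw (dcb - 2 * ρ) :=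
      mul_le_mul_of_nonneg_left h16 (by linarith)
    nlinarith
  · -- tl ≥ 1/4
    have h14 : (1 : ℝ) / 4 ≤ pw (dcb - 2 * ρ) := by linarith
    have hmul : (7 + 10 * M) * (1 / 4) ≤ (7 + 10 * M) * pw (dcb - 2 * ρ) :=
      mul_le_mul_of_nonneg_left h14 (by linarith)
    nlinarith

/-- arithmetic facts about the new ball radius -/
lemma rho_fact {r₀ M D : ℝ} (hr₀ : 0 < r₀) (hM : 1 ≤ M) (hD : 0 < D) (hDM : D ≤ M) :
    0 < pw (min (D / 8) (min r₀ 1 / 2)) ∧ pw (min (D / 8) (min r₀ 1 / 2)) ≤ D / 8 ∧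
      pw (min (D / 8) (min r₀ 1 / 2)) < r₀ ∧
      (pw (min (D / 8) (min r₀ 1 / 2)))⁻¹ ≤ (32 + 32 * M / min r₀ 1) * D⁻¹ := by
  have hmin1 : 0 < min r₀ 1 := lt_min hr₀ one_pos
  set x : ℝ := min (D / 8) (min r₀ 1 / 2) with hxdef
  have hxpos : 0 < x := lt_min (by positivity) (by positivity)
  have hρpos : 0 < pw x := pw_pos _
  have hρle : pw x ≤ x := pw_le hxpos
  have hρD : pw x ≤ D / 8 := hρle.trans (min_le_left _ _)
  have hρr₀ : pw x < r₀ := by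
    have h5 : pw x ≤ min r₀ 1 / 2 := hρle.trans (min_le_right _ _)
    have h6 : min r₀ 1 ≤ r₀ := min_le_left _ _
    linarith
  have hA₂ : 0 < 32 + 32 * M / min r₀ 1 := by positivity
  refine ⟨hρpos, hρD, hρr₀, ?_⟩
  have hxle1 : x ≤ 1 := by
    have h7 : min r₀ 1 ≤ 1 := min_le_right _ _
    have h8 : x ≤ min r₀ 1 / 2 := min_le_right _ _
    linarith
  have hρlow : x / 4 ≤ pw x := by
    have := le_pw hxpos
    rwa [min_eq_left hxle1] at this
  have hkey : D ≤ (32 + 32 * M / min r₀ 1) * pw x := by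
    have hq0 : (0:ℝ) ≤ 32 * M / min r₀ 1 := by positivity
    rcases min_cases (D / 8) (min r₀ 1 / 2) with ⟨hm, hm'⟩ | ⟨hm, hm'⟩ <;>
      rw [← hxdef] at hm
    · have l1 : D / 32 ≤ pw x := by linarith
      nlinarith [mul_nonneg hq0 hρpos.le]
    · have l1 : min r₀ 1 / 8 ≤ pw x := by linarith
      have l2 : 32 * M / min r₀ 1 * (min r₀ 1 / 8) ≤ 32 * M / min r₀ 1 * pw x :=
        mul_le_mul_of_nonneg_left l1 hq0
      have l3 : 32 * M / min r₀ 1 * (min r₀ 1 / 8) = 4 * M := by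
        field_simp
        ring
      rw [l3] at l2
      nlinarith [mul_nonneg (by norm_num : (0:ℝ) ≤ 32) hρpos.le]
  rw [← one_div, ← div_eq_mul_inv, div_le_div_iff₀ hρpos hD]
  linarith

lemma aux (n : ℕ) (r₀ M : ℝ) (hr₀ : 0 < r₀) (hM : 1 ≤ M)
    (K : Set ℂ) (hKM : ∀ w ∈ K, ‖w‖ ≤ M) (hKH : K ⊆ {w : ℂ | 0 < w.im}) :
    ∀ t : ℕ, t ≤ n → ∃ C : ℝ, 0 < C ∧
      ∀ z : Fin n → ℂ, Function.Injective z → (∀ j, z j ∈ K) →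
        ∃ L : Fin n → List (ℝ × ℝ) × ℝ,
          (∀ j : Fin n, (j : ℕ) < t → AInv r₀ (L j) ∧ (L j).1.length + 1 ≤ t) ∧
          (∀ j j' : Fin n, (j : ℕ) < t → (j' : ℕ) < t → j ≠ j' →
            Disjoint (Reg (z j) (L j)) (Reg (z j') (L j'))) ∧
          ∏ j ∈ Finset.univ.filter (fun j : Fin n => (j : ℕ) < t), chR (L j) ≤
            C * ∏ j ∈ Finset.univ.filter (fun j : Fin n => (j : ℕ) < t), (Dm z j)⁻¹ := by
  intro t
  induction t with
  | zero =>
    intro _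
    refine ⟨1, one_pos, fun z _ _ => ⟨fun _ => ([], 1), fun j hj => absurd hj (by omega),
      fun j j' hj _ _ => absurd hj (by omega), by simp⟩⟩
  | succ t ih =>
    intro ht
    obtain ⟨C, hC, H⟩ := ih (Nat.le_of_succ_le ht)
    clear ih
    have hA₁ : (1:ℝ) ≤ 7 + 10 * M := by linarith
    have hA₂ : (0:ℝ) < 32 + 32 * M / min r₀ 1 := by
      have : 0 < min r₀ 1 := lt_min hr₀ one_pos
      positivity
    refine ⟨(32 + 32 * M / min r₀ 1) * (7 + 10 * M) ^ (n * n) * C, by positivity, ?_⟩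
    intro z hz hzK
    obtain ⟨L, h1, h2, h3⟩ := H z hz hzK
    clear H
    have htn : t < n := ht
    set b : Fin n := ⟨t, htn⟩ with hbdef
    have hD : 0 < Dm z b := Dm_pos hz hzK hKH b
    have hDM : Dm z b ≤ M := le_trans (Dm_le_abs z b) (hKM _ (hzK b))
    obtain ⟨hρpos, hρD, hρr₀, hρinv⟩ := rho_fact hr₀ hM hD hDM
    set ρ : ℝ := pw (min (Dm z b / 8) (min r₀ 1 / 2)) with hρdef
    -- facts about distances from old points to the new one
    have hold : ∀ c : Fin n, (c : ℕ) < t →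
        0 < pw (dist (z c) (z b) - 2 * ρ) ∧
        pw (dist (z c) (z b) - 2 * ρ) ≤ dist (z c) (z b) - 2 * ρ ∧
        pw (dist (z c) (z b) - 2 * ρ) ≤ dist (z c) (z b) + 2 * ρ ∧
        (dist (z c) (z b) + 2 * ρ) / pw (dist (z c) (z b) - 2 * ρ) ≤ 7 + 10 * M := by
      intro c hc
      have hcb : c < b := by rw [Fin.lt_def]; exact hc
      have hd : Dm z b ≤ dist (z c) (z b) := Dm_le_dist z hcb
      have h8ρ : 8 * ρ ≤ dist (z c) (z b) := by linarith
      have hd2M : dist (z c) (z b) ≤ 2 * M := by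
        calc dist (z c) (z b) ≤ dist (z c) 0 + dist 0 (z b) := dist_triangle _ _ _
          _ ≤ 2 * M := by
            have hc1 : dist (z c) 0 = ‖z c‖ := by
              rw [Complex.dist_eq, sub_zero]
            have hc2 : dist 0 (z b) = ‖z b‖ := by
              rw [dist_comm, Complex.dist_eq, sub_zero]
            rw [hc1, hc2]
            have := hKM _ (hzK c)
            have := hKM _ (hzK b)
            linarith
      exact hold_fact hM hρpos h8ρ hd2M
    -- the new family of chains
    set L' : Fin n → List (ℝ × ℝ) × ℝ := fun j =>
      if (j : ℕ) < t then
        surg (pw (dist (z j) (z b) - 2 * ρ)) (dist (z j) (z b) + 2 * ρ) (L j)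
      else ([], ρ) with hL'def
    have hL'b : L' b = ([], ρ) := by rw [hL'def]; simp [hbdef]
    have hL'old : ∀ j : Fin n, (j : ℕ) < t →
        L' j = surg (pw (dist (z j) (z b) - 2 * ρ)) (dist (z j) (z b) + 2 * ρ) (L j) := by
      intro j hj
      rw [hL'def]
      simp [hj]
    refine ⟨L', ?_, ?_, ?_⟩
    · -- invariants
      intro j hj
      by_cases hjt : (j : ℕ) < t
      · rw [hL'old j hjt]
        obtain ⟨hI, hlen⟩ := h1 j hjt
        obtain ⟨htlpos, htlle, htlth, -⟩ := hold j hjt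
        refine ⟨surg_AInv hI htlpos htlth (pw_P2 _), ?_⟩
        have := surg_len hI htlth
        omega
      · have hjb : j = b := Fin.ext (by simp only [hbdef]; omega)
        rw [hjb, hL'b]
        refine ⟨AInv_nil hρpos hρr₀ (pw_P2 _), ?_⟩
        simp only [List.length_nil]
        omega
    · -- disjointness
      have hdisj_b : ∀ j : Fin n, (j : ℕ) < t →
          Disjoint (Reg (z j) (L' j)) (Metric.ball (z b) ρ) := by
        intro j hj
        obtain ⟨htlpos, htlle, htlth, -⟩ := hold j hj
        rw [Set.disjoint_left]
        intro x hx hxb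
        rw [hL'old j hj] at hx
        have hav := surg_avoid hx
        rw [Metric.mem_ball] at hxb
        have htri1 : dist (z j) (z b) ≤ dist x (z j) + dist x (z b) := by
          rw [dist_comm x (z j)]
          exact dist_triangle _ _ _
        have htri2 : dist x (z j) ≤ dist x (z b) + dist (z j) (z b) := by
          rw [dist_comm (z j) (z b)]
          exact dist_triangle _ _ _
        rcases hav with h | h
        · linarith
        · linarith
      intro j j' hj hj' hne
      by_cases hjt : (j : ℕ) < t <;> by_cases hjt' : (j' : ℕ) < t
      · rw [hL'old j hjt, hL'old j' hjt']
        exact (h2 j j' hjt hjt' hne).mono surg_reg_sub surg_reg_sub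
      · have hjb' : j' = b := Fin.ext (by simp only [hbdef]; omega)
        rw [hjb', hL'b, Reg_nil]
        exact hdisj_b j hjt
      · have hjb : j = b := Fin.ext (by simp only [hbdef]; omega)
        rw [hjb, hL'b, Reg_nil]
        exact (hdisj_b j' hjt').symm
      · exfalso
        have e1 : j = b := Fin.ext (by simp only [hbdef]; omega)
        have e2 : j' = b := Fin.ext (by simp only [hbdef]; omega)
        rw [e1, e2] at hne
        exact hne rfl
    · -- the product estimate
      have hfilt : Finset.univ.filter (fun j : Fin n => (j : ℕ) < t + 1) =
          insert b (Finset.univ.filter (fun j : Fin n => (j : ℕ) < t)) := by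
        ext j
        simp only [Finset.mem_filter, Finset.mem_univ, true_and, Finset.mem_insert]
        constructor
        · intro hjt
          by_cases hjt' : (j : ℕ) < t
          · exact Or.inr hjt'
          · exact Or.inl (Fin.ext (by simp only [hbdef]; omega))
        · rintro (rfl | hjt)
          · simp only [hbdef]; omega
          · omega
      have hbnot : b ∉ Finset.univ.filter (fun j : Fin n => (j : ℕ) < t) := by
        simp [hbdef]
      rw [hfilt, Finset.prod_insert hbnot, Finset.prod_insert hbnot]
      have hchRb : chR (L' b) = ρ⁻¹ := by
        rw [hL'b, chR]
        simp
      have hcard : (Finset.univ.filter (fun j : Fin n => (j : ℕ) < t)).card ≤ n := by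
        calc _ ≤ (Finset.univ : Finset (Fin n)).card := Finset.card_filter_le _ _
          _ = n := by simp
      have hstep : ∀ j ∈ Finset.univ.filter (fun j : Fin n => (j : ℕ) < t),
          chR (L' j) ≤ (7 + 10 * M) ^ n * chR (L j) := by
        intro j hjm
        rw [Finset.mem_filter] at hjm
        have hj := hjm.2
        obtain ⟨hI, hlen⟩ := h1 j hj
        obtain ⟨htlpos, htlle, htlth, hratio⟩ := hold j hj
        rw [hL'old j hj]
        calc chR (surg (pw (dist (z j) (z b) - 2 * ρ)) (dist (z j) (z b) + 2 * ρ) (L j))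
            ≤ ((dist (z j) (z b) + 2 * ρ) / pw (dist (z j) (z b) - 2 * ρ)) ^
                ((L j).1.length + 1) * chR (L j) := surg_chR hI htlpos htlth
          _ ≤ (7 + 10 * M) ^ n * chR (L j) := by
              apply mul_le_mul_of_nonneg_right _ (chR_nonneg hI)
              calc ((dist (z j) (z b) + 2 * ρ) / pw (dist (z j) (z b) - 2 * ρ)) ^
                    ((L j).1.length + 1)
                  ≤ (7 + 10 * M) ^ ((L j).1.length + 1) :=
                    pow_le_pow_left₀ (by positivity) hratio _
                _ ≤ (7 + 10 * M) ^ n := pow_le_pow_right₀ hA₁ (by omega)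
      have hL'nonneg : ∀ j ∈ Finset.univ.filter (fun j : Fin n => (j : ℕ) < t),
          0 ≤ chR (L' j) := by
        intro j hjm
        rw [Finset.mem_filter] at hjm
        rw [hL'old j hjm.2]
        obtain ⟨htlpos, htlle, htlth, -⟩ := hold j hjm.2
        exact chR_nonneg (surg_AInv (h1 j hjm.2).1 htlpos htlth (pw_P2 _))
      have hprod1 : ∏ j ∈ Finset.univ.filter (fun j : Fin n => (j : ℕ) < t), chR (L' j) ≤
          (7 + 10 * M) ^ (n * n) *
            ∏ j ∈ Finset.univ.filter (fun j : Fin n => (j : ℕ) < t), chR (L j) := by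
        calc ∏ j ∈ Finset.univ.filter (fun j : Fin n => (j : ℕ) < t), chR (L' j)
            ≤ ∏ j ∈ Finset.univ.filter (fun j : Fin n => (j : ℕ) < t),
                ((7 + 10 * M) ^ n * chR (L j)) := Finset.prod_le_prod hL'nonneg hstep
          _ = ((7 + 10 * M) ^ n) ^ (Finset.univ.filter (fun j : Fin n => (j : ℕ) < t)).card *
                ∏ j ∈ Finset.univ.filter (fun j : Fin n => (j : ℕ) < t), chR (L j) := by
              rw [Finset.prod_mul_distrib, Finset.prod_const]
          _ ≤ (7 + 10 * M) ^ (n * n) *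
                ∏ j ∈ Finset.univ.filter (fun j : Fin n => (j : ℕ) < t), chR (L j) := by
              apply mul_le_mul_of_nonneg_right
              · rw [← pow_mul]
                exact pow_le_pow_right₀ hA₁ (Nat.mul_le_mul_left n hcard)
              · apply Finset.prod_nonneg
                intro j hjm
                rw [Finset.mem_filter] at hjm
                exact chR_nonneg (h1 j hjm.2).1
      rw [hchRb]
      calc ρ⁻¹ * ∏ j ∈ Finset.univ.filter (fun j : Fin n => (j : ℕ) < t), chR (L' j)
          ≤ ((32 + 32 * M / min r₀ 1) * (Dm z b)⁻¹) * ((7 + 10 * M) ^ (n * n) *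
              ∏ j ∈ Finset.univ.filter (fun j : Fin n => (j : ℕ) < t), chR (L j)) := by
            apply mul_le_mul hρinv hprod1 (Finset.prod_nonneg hL'nonneg) (by positivity)
        _ ≤ ((32 + 32 * M / min r₀ 1) * (Dm z b)⁻¹) * ((7 + 10 * M) ^ (n * n) *
              (C * ∏ j ∈ Finset.univ.filter (fun j : Fin n => (j : ℕ) < t), (Dm z j)⁻¹)) := by
            apply mul_le_mul_of_nonneg_left _ (by positivity)
            exact mul_le_mul_of_nonneg_left h3 (by positivity)
        _ = (32 + 32 * M / min r₀ 1) * (7 + 10 * M) ^ (n * n) * C *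
              ((Dm z b)⁻¹ * ∏ j ∈ Finset.univ.filter (fun j : Fin n => (j : ℕ) < t),
                (Dm z j)⁻¹) := by
            ring

/-! ### conversion to the statement's format -/

lemma prod_Icc_shift (m : ℕ) (f : ℕ → ℝ) :
    ∏ k ∈ Finset.Icc 1 m, f k = ∏ i ∈ Finset.range m, f (i + 1) := by
  induction m with
  | zero => simp
  | succ m ih =>
    rw [Finset.prod_Icc_succ_top (by omega) f, ih, Finset.prod_range_succ]

lemma list_prod_getD {α : Type*} (f : α → ℝ) (d : α) (l : List α) :
    (l.map f).prod = ∏ i ∈ Finset.range l.length, f (l.getD i d) := by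
  induction l with
  | nil => simp
  | cons a l ih =>
    rw [List.map_cons, List.prod_cons, List.length_cons, Finset.prod_range_succ']
    simp only [List.getD_cons_succ, List.getD_cons_zero]
    rw [ih]
    ring

lemma prod_annR (l : List (ℝ × ℝ)) (h : ∀ p ∈ l, p.2 ≠ 0) :
    (l.map annR).prod = (l.map Prod.fst).prod / (l.map Prod.snd).prod := by
  induction l with
  | nil => simp
  | cons a l ih =>
    simp only [List.map_cons, List.prod_cons]
    rw [ih (fun p hp => h p (by simp [hp])), annR]
    have ha : a.2 ≠ 0 := h a (by simp)
    by_cases hl : (l.map Prod.snd).prod = 0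
    · rw [hl]
      simp
    · field_simp


/-- **Separating annuli algorithm.**  Fix `n ∈ ℕ`, `r₀ > 0` and a compact set `K` in the
upper half-plane `ℍ`.  There is a constant `C = C(n, K, r₀) > 0` such that for any distinct
points `z 0, …, z (n-1) ∈ K` one can choose for each `j` a number `m j ∈ {1, …, n}` and
radii `s j k, r j k ∈ (0, r₀)` (with each `r j k` a negative power of `2`) satisfying
`0 < s j k < r j k` for `1 ≤ k ≤ m j - 1` and `s j (m j) = 0 < r j (m j)`, so that the
annuli `B(z j, r j k) \ B(z j, s j k)` are pairwise disjoint and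
`∏ⱼ (∏_{k=1}^{m j - 1} s j k) / (∏_{k=1}^{m j} r j k) ≤ C · ∏ⱼ 1 / minᵢ<ⱼ |z j - z i|`,
with the conventions that an empty product equals `1` and `z₀ = 0` (so that for the first
point the minimum is `|z 0 - 0|`). -/
theorem annuli_algorithm
    (n : ℕ) (hn : 0 < n) (r₀ : ℝ) (hr₀ : 0 < r₀)
    (K : Set ℂ) (hK : IsCompact K) (hKH : K ⊆ {w : ℂ | 0 < w.im}) :
    ∃ C : ℝ, 0 < C ∧
      ∀ z : Fin n → ℂ, Function.Injective z → (∀ j, z j ∈ K) →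
        ∃ (m : Fin n → ℕ) (s r : Fin n → ℕ → ℝ),
          (∀ j, 1 ≤ m j ∧ m j ≤ n) ∧
          (∀ j k, 1 ≤ k → k ≤ m j →
            r j k ∈ Set.Ioo 0 r₀ ∧ ∃ p : ℕ, r j k = (2 : ℝ)⁻¹ ^ p) ∧
          (∀ j k, 1 ≤ k → k ≤ m j - 1 → s j k ∈ Set.Ioo 0 r₀ ∧ s j k < r j k) ∧
          (∀ j, s j (m j) = 0) ∧
          (∀ j k j' k', 1 ≤ k → k ≤ m j → 1 ≤ k' → k' ≤ m j' →
            ((j, k) : Fin n × ℕ) ≠ (j', k') →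
            Disjoint (Metric.ball (z j) (r j k) \ Metric.ball (z j) (s j k))
              (Metric.ball (z j') (r j' k') \ Metric.ball (z j') (s j' k'))) ∧
          (∏ j, (∏ k ∈ Finset.Icc 1 (m j - 1), s j k) /
              (∏ k ∈ Finset.Icc 1 (m j), r j k)) ≤
            C * ∏ j, 1 / sInf (insert (‖z j‖)
              {d : ℝ | ∃ i, i < j ∧ d = ‖z j - z i‖}) := by
  obtain ⟨M₀, hM₀⟩ := hK.isBounded.exists_norm_le
  have hM : (1 : ℝ) ≤ max M₀ 1 := le_max_right _ _
  have hKM : ∀ w ∈ K, ‖w‖ ≤ max M₀ 1 := fun w hw => by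
    exact (hM₀ w hw).trans (le_max_left _ _)
  obtain ⟨C, hC, H⟩ := aux n r₀ (max M₀ 1) hr₀ hM K hKM hKH n le_rfl
  refine ⟨C, hC, ?_⟩
  intro z hz hzK
  obtain ⟨L, h1, h2, h3⟩ := H z hz hzK
  have hjn : ∀ j : Fin n, (j : ℕ) < n := fun j => j.isLt
  have hlenf : ∀ j : Fin n, ((L j).1 ++ [((0:ℝ), (L j).2)]).length = (L j).1.length + 1 := by
    intro j
    simp
  have hI : ∀ j, AInv r₀ (L j) := fun j => (h1 j (hjn j)).1
  have hlen : ∀ j, (L j).1.length + 1 ≤ n := fun j => (h1 j (hjn j)).2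
  have hmem_full : ∀ j : Fin n, ∀ p ∈ (L j).1 ++ [((0:ℝ), (L j).2)],
      0 ≤ p.1 ∧ p.1 < p.2 ∧ p.2 < r₀ ∧ P2 p.2 := by
    intro j p hp
    rcases List.mem_append.1 hp with h | h
    · obtain ⟨a1, a2, a3, a4⟩ := (hI j).mem p h
      exact ⟨a1.le, a2, a3, a4⟩
    · simp only [List.mem_singleton] at h
      subst h
      exact ⟨le_rfl, (hI j).bpos, (hI j).blt, (hI j).bP2⟩
  have hpair_full : ∀ j : Fin n, ((L j).1 ++ [((0:ℝ), (L j).2)]).Pairwise Rin := by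
    intro j
    rw [List.pairwise_append]
    refine ⟨(hI j).pair, List.pairwise_singleton _ _, ?_⟩
    intro a ha p hp
    simp only [List.mem_singleton] at hp
    subst hp
    exact (hI j).ball_le a ha
  have hAnn_sub : ∀ j : Fin n, ∀ p ∈ (L j).1 ++ [((0:ℝ), (L j).2)],
      Ann (z j) p ⊆ Reg (z j) (L j) := by
    intro j p hp
    rcases List.mem_append.1 hp with h | h
    · intro x hx
      exact Or.inl (mem_iUnion.2 ⟨p, mem_iUnion.2 ⟨h, hx⟩⟩)
    · simp only [List.mem_singleton] at h
      subst h
      intro x hx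
      exact Or.inr hx.1
  refine ⟨fun j => (L j).1.length + 1,
    fun j k => (((L j).1 ++ [((0:ℝ), (L j).2)]).getD (k - 1) (0, 1)).1,
    fun j k => (((L j).1 ++ [((0:ℝ), (L j).2)]).getD (k - 1) (0, 1)).2, ?_, ?_, ?_, ?_, ?_, ?_⟩
  · intro j
    beta_reduce
    exact ⟨by omega, hlen j⟩
  · intro j k hk1 hk2
    beta_reduce at hk2 ⊢
    have hk : k - 1 < ((L j).1 ++ [((0:ℝ), (L j).2)]).length := by rw [hlenf]; omega
    rw [List.getD_eq_getElem _ _ hk]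
    obtain ⟨a1, a2, a3, a4⟩ := hmem_full j _ (List.getElem_mem hk)
    exact ⟨⟨lt_of_le_of_lt a1 a2, a3⟩, a4⟩
  · intro j k hk1 hk2
    beta_reduce at hk2 ⊢
    have hk : k - 1 < (L j).1.length := by omega
    rw [List.getD_append _ _ _ _ hk, List.getD_eq_getElem _ _ hk]
    obtain ⟨a1, a2, a3, -⟩ := (hI j).mem _ (List.getElem_mem hk)
    exact ⟨⟨a1, a2.trans a3⟩, a2⟩
  · intro j
    beta_reduce
    have h6 : ((L j).1 ++ [((0:ℝ), (L j).2)]).getD ((L j).1.length + 1 - 1) (0, 1) =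
        ((0:ℝ), (L j).2) := by
      rw [Nat.add_sub_cancel, List.getD_eq_getElem _ _ (by rw [hlenf]; omega)]
      exact List.getElem_concat_length rfl _
    rw [h6]
  · -- disjointness
    intro j k j' k' hk1 hk2 hk1' hk2' hne
    beta_reduce at hk2 hk2' ⊢
    have hkf : k - 1 < ((L j).1 ++ [((0:ℝ), (L j).2)]).length := by rw [hlenf]; omega
    have hkf' : k' - 1 < ((L j').1 ++ [((0:ℝ), (L j').2)]).length := by rw [hlenf]; omega
    rw [List.getD_eq_getElem _ _ hkf, List.getD_eq_getElem _ _ hkf']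
    by_cases hjj : j = j'
    · subst hjj
      have hkk : k ≠ k' := by
        intro hc
        exact hne (by rw [hc])
      have hdisj : ∀ i i' : ℕ, ∀ (hi : i < ((L j).1 ++ [((0:ℝ), (L j).2)]).length)
          (hi' : i' < ((L j).1 ++ [((0:ℝ), (L j).2)]).length), i < i' →
          Disjoint
            (Metric.ball (z j) (((L j).1 ++ [((0:ℝ), (L j).2)])[i]).2 \
              Metric.ball (z j) (((L j).1 ++ [((0:ℝ), (L j).2)])[i]).1)
            (Metric.ball (z j) (((L j).1 ++ [((0:ℝ), (L j).2)])[i']).2 \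
              Metric.ball (z j) (((L j).1 ++ [((0:ℝ), (L j).2)])[i']).1) := by
        intro i i' hi hi' hii
        exact Ann_disjoint (z j)
          (List.pairwise_iff_getElem.1 (hpair_full j) i i' hi hi' hii)
      rcases lt_trichotomy (k - 1) (k' - 1) with h | h | h
      · exact hdisj _ _ hkf hkf' h
      · omega
      · exact (hdisj _ _ hkf' hkf h).symm
    · have s1 := hAnn_sub j _ (List.getElem_mem hkf)
      have s2 := hAnn_sub j' _ (List.getElem_mem hkf')
      exact (h2 j j' (hjn j) (hjn j') hjj).mono s1 s2
  · -- the product bound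
    beta_reduce
    have hLj : ∀ j : Fin n,
        (∏ k ∈ Finset.Icc 1 ((L j).1.length + 1 - 1),
            (((L j).1 ++ [((0:ℝ), (L j).2)]).getD (k - 1) (0, 1)).1) /
          (∏ k ∈ Finset.Icc 1 ((L j).1.length + 1),
            (((L j).1 ++ [((0:ℝ), (L j).2)]).getD (k - 1) (0, 1)).2) =
        chR (L j) := by
      intro j
      have hnum : (∏ k ∈ Finset.Icc 1 ((L j).1.length + 1 - 1),
          (((L j).1 ++ [((0:ℝ), (L j).2)]).getD (k - 1) (0, 1)).1) =
          ((L j).1.map Prod.fst).prod := by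
        rw [Nat.add_sub_cancel, prod_Icc_shift]
        rw [list_prod_getD Prod.fst (0, 1) (L j).1]
        apply Finset.prod_congr rfl
        intro i hi
        rw [Finset.mem_range] at hi
        rw [Nat.add_sub_cancel, List.getD_append _ _ _ _ hi]
      have hden : (∏ k ∈ Finset.Icc 1 ((L j).1.length + 1),
          (((L j).1 ++ [((0:ℝ), (L j).2)]).getD (k - 1) (0, 1)).2) =
          ((L j).1.map Prod.snd).prod * (L j).2 := by
        rw [prod_Icc_shift]
        have he : (∏ i ∈ Finset.range ((L j).1.length + 1),
            (((L j).1 ++ [((0:ℝ), (L j).2)]).getD (i + 1 - 1) (0, 1)).2) =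
            ∏ i ∈ Finset.range (((L j).1 ++ [((0:ℝ), (L j).2)]).length),
              (((L j).1 ++ [((0:ℝ), (L j).2)]).getD i (0, 1)).2 := by
          rw [hlenf]
          apply Finset.prod_congr rfl
          intro i _
          rw [Nat.add_sub_cancel]
        rw [he, ← list_prod_getD Prod.snd (0, 1) ((L j).1 ++ [((0:ℝ), (L j).2)])]
        simp
      rw [hnum, hden, chR, prod_annR _ (fun p hp => (((hI j).mem p hp).1.trans
        ((hI j).mem p hp).2.1).ne'), div_div]
    calc (∏ j, (∏ k ∈ Finset.Icc 1 ((L j).1.length + 1 - 1),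
            (((L j).1 ++ [((0:ℝ), (L j).2)]).getD (k - 1) (0, 1)).1) /
          (∏ k ∈ Finset.Icc 1 ((L j).1.length + 1),
            (((L j).1 ++ [((0:ℝ), (L j).2)]).getD (k - 1) (0, 1)).2))
        = ∏ j, chR (L j) := Finset.prod_congr rfl (fun j _ => hLj j)
      _ ≤ C * ∏ j, (Dm z j)⁻¹ := by
          have hfu : Finset.univ.filter (fun j : Fin n => (j : ℕ) < n) = Finset.univ := by
            ext j
            simp [j.isLt]
          rw [hfu] at h3
          exact h3
      _ = C * ∏ j, 1 / sInf (insert (‖z j‖)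
            {d : ℝ | ∃ i, i < j ∧ d = ‖z j - z i‖}) := by
          simp only [Dm, one_div]
end
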